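/- arXiv:2405.08937 — 6 statements merged into one kernel-verified Lean document; each statement's English description precedes it below -/
import Mathlib

section
/- Let G be a finite group, n a positive integer, and k a positive divisor of n. The number of n-tuples (a₁,...,aₙ) ∈ Gⁿ with a₁a₂⋯aₙ = 1 that are fixed by cyclic rotation by k steps equals [G ÷ (n/k)] · |G|^{k-1}, where [G ÷ m] denotes the number of elements g ∈ G with g^m = 1. -/
open Fin.NatCast

private lemma aux_prod {G : Type*} [Group G] {k : ℕ} (hk : 0 < k) (c : Fin k → G) :
    ∀ m : ℕ,
      (List.ofFn (fun i : Fin (k * m) => c ⟨i.1 % k, Nat.mod_lt _ hk⟩)).prod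
        = (List.ofFn c).prod ^ m := by
  intro m
  induction m with
  | zero => simp [List.ofFn]
  | succ m ih =>
      rw [show (List.ofFn (fun i : Fin (k * (m+1)) => c ⟨i.1 % k, Nat.mod_lt _ hk⟩))
          = List.ofFn (fun i : Fin (k * m + k) => c ⟨i.1 % k, Nat.mod_lt _ hk⟩) from rfl,
        List.ofFn_add, List.prod_append, pow_succ]
      have h1 : (List.ofFn fun i : Fin (k*m) =>
          c ⟨(Fin.castLE (Nat.le_add_right (k*m) k) i).1 % k, Nat.mod_lt _ hk⟩).prod = (List.ofFn c).prod ^ m := ih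
      rw [h1]
      have h2 : (List.ofFn fun j : Fin k =>
          c ⟨(Fin.natAdd (k*m) j).1 % k, Nat.mod_lt _ hk⟩) = List.ofFn c := by
        congr 1
        funext j
        congr 1
        apply Fin.ext
        simp [Nat.mul_add_mod, Nat.mod_eq_of_lt j.2]
      rw [h2]

private lemma aux_periodic {G : Type*} {n k : ℕ} [NeZero n] (hkn : k ∣ n) (a : Fin n → G)
    (h : ∀ i : Fin n, a (i + (k : Fin n)) = a i) (i : Fin n) :
    a i = a ⟨i.1 % k, lt_of_le_of_lt (Nat.mod_le _ _) i.2⟩ := by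
  obtain ⟨j, hj⟩ := i
  induction j using Nat.strong_induction_on with
  | _ j ih =>
    by_cases hjk : j < k
    · congr 1
      exact (Fin.ext (Nat.mod_eq_of_lt hjk)).symm
    · push_neg at hjk
      have hk0 : 0 < k := Nat.pos_of_ne_zero (by
        rintro rfl; exact absurd (Nat.eq_zero_of_zero_dvd hkn) (NeZero.ne n))
      have hkn' : k < n := lt_of_le_of_lt hjk hj
      have hj' : j - k < n := lt_of_le_of_lt (Nat.sub_le _ _) hj
      have key : (⟨j - k, hj'⟩ : Fin n) + (k : Fin n) = ⟨j, hj⟩ := by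
        apply Fin.ext
        simp [Fin.add_def, Fin.val_natCast, Nat.mod_eq_of_lt hkn',
          Nat.sub_add_cancel hjk, Nat.mod_eq_of_lt hj]
      have := (key ▸ h ⟨j - k, hj'⟩ : a ⟨j, hj⟩ = a ⟨j - k, hj'⟩)
      rw [this, ih (j - k) (by omega) hj']
      congr 1
      apply Fin.ext
      show (j - k) % k = j % k
      conv_rhs => rw [← Nat.sub_add_cancel hjk]
      rw [Nat.add_mod_right]


/-- The number of identity-product `n`-tuples fixed by cyclic rotation by `k` steps
(for `k ∣ n`) is `[G ÷ (n/k)] ⬝ |G|^(k-1)`. -/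
theorem card_fixed_identity_product_tuples (G : Type*) [Group G] [Fintype G]
    (n k : ℕ) [NeZero n] (hk : 0 < k) (hkn : k ∣ n) :
    Nat.card {a : Fin n → G //
        (List.ofFn a).prod = 1 ∧ ∀ i : Fin n, a (i + (k : Fin n)) = a i}
      = Nat.card {g : G // g ^ (n / k) = 1} * Fintype.card G ^ (k - 1) := by
  obtain ⟨m, rfl⟩ := hkn
  have hm : 0 < m := by
    rcases Nat.eq_zero_or_pos m with h | h
    · exfalso; subst h; exact absurd (Nat.mul_zero k) (NeZero.ne _)
    · exact h
  rw [Nat.mul_div_cancel_left m hk]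
  have hkdvd : k ∣ k * m := Dvd.intro_left m (by ring)
  -- E1
  have E1 : {a : Fin (k * m) → G //
        (List.ofFn a).prod = 1 ∧ ∀ i : Fin (k * m), a (i + (k : Fin (k * m))) = a i}
      ≃ {c : Fin k → G // (List.ofFn c).prod ^ m = 1} := by
    have hkle : k ≤ k * m := Nat.le_mul_of_pos_right k hm
    refine
      { toFun := fun a => ⟨fun j => a.1 ⟨j.1, lt_of_lt_of_le j.2 hkle⟩, ?_⟩
        invFun := fun c => ⟨fun i => c.1 ⟨i.1 % k, Nat.mod_lt _ hk⟩, ?_, ?_⟩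
        left_inv := ?_
        right_inv := ?_ }
    · obtain ⟨a, ha1, ha2⟩ := a
      have key : a = fun i : Fin (k * m) =>
          (fun j : Fin k => a ⟨j.1, lt_of_lt_of_le j.2 hkle⟩) ⟨i.1 % k, Nat.mod_lt _ hk⟩ := by
        funext i
        rw [aux_periodic hkdvd a ha2 i]
      rw [← aux_prod hk _ m, ← key, ha1]
    · rw [aux_prod hk _ m, c.2]
    · intro i
      have hv : ((i + (k : Fin (k * m))).1) % k = i.1 % k := by
        rw [Fin.add_def]
        simp only [Fin.val_natCast]
        rw [Nat.mod_mod_of_dvd _ hkdvd, Nat.add_mod, Nat.mod_mod_of_dvd _ hkdvd,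
          Nat.mod_self, Nat.add_zero, Nat.mod_mod]
      exact congrArg c.1 (Fin.ext hv)
    · rintro ⟨a, ha1, ha2⟩
      apply Subtype.ext
      funext i
      show a ⟨i.1 % k, _⟩ = a i
      exact (aux_periodic hkdvd a ha2 i).symm
    · rintro ⟨c, hc⟩
      apply Subtype.ext
      funext j
      show c ⟨j.1 % k, _⟩ = c j
      congr 1
      exact Fin.ext (Nat.mod_eq_of_lt j.2)
  rw [Nat.card_congr E1]
  obtain ⟨k', rfl⟩ : ∃ k', k = k' + 1 := ⟨k - 1, (Nat.succ_pred_eq_of_pos hk).symm⟩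
  have E2 : {c : Fin (k' + 1) → G // (List.ofFn c).prod ^ m = 1}
      ≃ {g : G // g ^ m = 1} × (Fin k' → G) := by
    refine
      { toFun := fun c => (⟨(List.ofFn c.1).prod, c.2⟩, fun j => c.1 j.succ)
        invFun := fun p => ⟨Fin.cons (p.1.1 * (List.ofFn p.2).prod⁻¹) p.2, ?_⟩
        left_inv := ?_
        right_inv := ?_ }
    · rw [List.ofFn_succ]
      simp [p.1.2]
    · rintro ⟨c, hc⟩
      apply Subtype.ext
      funext i
      dsimp only
      induction i using Fin.cases with
      | zero => simp [Fin.cons_zero, List.ofFn_succ, mul_assoc]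
      | succ j => simp
    · rintro ⟨⟨g, hg⟩, t⟩
      refine Prod.ext ?_ ?_
      · apply Subtype.ext
        show (List.ofFn (Fin.cons (g * (List.ofFn t).prod⁻¹) t)).prod = g
        rw [List.ofFn_succ]
        simp
      · funext j
        simp
  rw [Nat.card_congr E2, Nat.card_prod]
  congr 1
  · simp [Nat.card_eq_fintype_card, Fintype.card_fun]
end

section
/- Let G be a finite group and n a positive integer. The number of orbits of the cyclic rotation action of Cₙ on the set G₁ⁿ = {(a₁,...,aₙ) ∈ Gⁿ : a₁a₂⋯aₙ = 1} equals (1/n) · ∑_{d|n} φ(n/d) · [G ÷ (n/d)] · |G|^{d-1}. -/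
theorem prod_of_periodic {M : Type*} [Monoid M] (d : ℕ) (hd : 0 < d) :
    ∀ (m : ℕ) (l : List M), l.length = m * d →
    (∀ i (h : i < l.length), l[i] = l[i % d]'(Nat.lt_of_le_of_lt (Nat.mod_le i d) h)) →
    l.prod = (l.take d).prod ^ m := by
  intro m
  induction m with
  | zero =>
    intro l hl _
    simp at hl
    simp [hl]
  | succ m ih =>
    intro l hl hper
    have e1 : (m + 1) * d = m * d + d := Nat.succ_mul m d
    have hdl : d ≤ l.length := by rw [hl]; omega
    have hdroplen : (l.drop d).length = m * d := by
      rw [List.length_drop, hl]; omega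
    have hdropper : ∀ i (h : i < (l.drop d).length),
        (l.drop d)[i] = (l.drop d)[i % d]'(Nat.lt_of_le_of_lt (Nat.mod_le i d) h) := by
      intro i h
      rw [hdroplen] at h
      have h1 : d + i < l.length := by rw [hl]; omega
      have h2 : d + i % d < l.length := by
        have := Nat.mod_le i d; rw [hl]; omega
      rw [List.getElem_drop, List.getElem_drop]
      rw [hper (d + i) h1, hper (d + i % d) h2]
      congr 1
      rw [Nat.add_mod_left, Nat.add_mod_left, Nat.mod_mod_of_dvd i dvd_rfl]
    have hdprod := ih (l.drop d) hdroplen hdropper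
    rcases Nat.eq_zero_or_pos m with hm | hm
    · subst hm
      have hnil : l.drop d = [] := by
        rw [← List.length_eq_zero_iff, hdroplen]; ring
      calc l.prod = (l.take d ++ l.drop d).prod := by rw [List.take_append_drop]
        _ = (l.take d).prod * (l.drop d).prod := List.prod_append
        _ = (l.take d).prod ^ (0 + 1) := by simp [hnil]
    · have hmd : d ≤ m * d := Nat.le_mul_of_pos_left d hm
      have htake : (l.drop d).take d = l.take d := by
        apply List.ext_getElem
        · rw [List.length_take, List.length_take, hdroplen, hl]
          omega
        · intro i h1 h2
          rw [List.length_take, hdroplen] at h1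
          have hid : i < d := by omega
          have hdi : d + i < l.length := by rw [hl]; omega
          have hmod : (d + i) % d = i := by
            rw [Nat.add_mod_left]; exact Nat.mod_eq_of_lt hid
          rw [List.getElem_take, List.getElem_take, List.getElem_drop,
            hper (d + i) hdi]
          congr 1
      calc l.prod = (l.take d ++ l.drop d).prod := by rw [List.take_append_drop]
        _ = (l.take d).prod * (l.drop d).prod := List.prod_append
        _ = (l.take d).prod * (l.take d).prod ^ m := by rw [hdprod, htake]
        _ = (l.take d).prod ^ (m + 1) := (pow_succ' _ _).symm

section
variable {n : ℕ} [NeZero n]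
open Fin.CommRing

theorem natCast_gcd_eq_mul (r : Fin n) : ∃ u : Fin n, ((n.gcd r.val : ℕ) : Fin n) = u * r := by
  refine ⟨((Nat.gcdB n r.val : ℤ) : Fin n), ?_⟩
  have h := Nat.gcd_eq_gcd_ab n r.val
  have h2 : ((n.gcd r.val : ℤ) : Fin n) = (((n : ℤ) * Nat.gcdA n r.val + (r.val : ℤ) * Nat.gcdB n r.val : ℤ) : Fin n) := by
    exact_mod_cast congrArg (fun z : ℤ => ((z : ℤ) : Fin n)) h
  push_cast at h2
  rw [show ((n : ℕ) : Fin n) = 0 from Fin.natCast_self n] at h2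
  rw [h2]
  ring

theorem exists_nsmul_of_gcd_dvd (r : Fin n) {d : ℕ} (hgd : n.gcd r.val ∣ d) (c : ℕ) :
    ∃ w : ℕ, ((c * d : ℕ) : Fin n) = w • r := by
  obtain ⟨u, hu⟩ := natCast_gcd_eq_mul r
  obtain ⟨s, hs⟩ := hgd
  refine ⟨((((c * s : ℕ) : Fin n)) * u).val, ?_⟩
  rw [nsmul_eq_mul, Fin.cast_val_eq_self, hs]
  push_cast
  rw [hu]
  ring

theorem rot_iterate {G : Type*} (a : Fin n → G) (r : Fin n)
    (h : ∀ i, a (i + r) = a i) : ∀ (k : ℕ) (i : Fin n), a (i + k • r) = a i := by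
  intro k
  induction k with
  | zero => intro i; simp
  | succ k ih =>
    intro i
    rw [succ_nsmul, ← add_assoc, h (i + k • r)]
    exact ih i

theorem periodic_iff {G : Type*} (a : Fin n → G) (r : Fin n) {d : ℕ} (hd : 0 < d)
    (hdn : d ∣ n) (hdr : d ∣ r.val) (hgd : n.gcd r.val ∣ d) :
    (∀ i, a (i + r) = a i) ↔
      ∀ i : Fin n, a i = a ⟨i.val % d,
        Nat.lt_of_lt_of_le (Nat.mod_lt _ hd) (Nat.le_of_dvd (Nat.pos_of_ne_zero (NeZero.ne n)) hdn)⟩ := by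
  have hlt : ∀ i : Fin n, i.val % d < n :=
    fun i => Nat.lt_of_lt_of_le (Nat.mod_lt _ hd)
      (Nat.le_of_dvd (Nat.pos_of_ne_zero (NeZero.ne n)) hdn)
  constructor
  · intro h i
    obtain ⟨w, hw⟩ := exists_nsmul_of_gcd_dvd r hgd (i.val / d)
    have hi : i = (⟨i.val % d, hlt i⟩ : Fin n) + w • r := by
      rw [← hw]
      apply Fin.ext
      rw [Fin.add_def]
      simp only [Fin.val_natCast]
      rw [Nat.mod_eq_of_lt (lt_of_le_of_lt (Nat.div_mul_le_self i.val d) i.isLt),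
        Nat.mod_add_div', Nat.mod_eq_of_lt i.isLt]
    conv_lhs => rw [hi]
    exact rot_iterate a r h w _
  · intro h i
    rw [h (i + r), h i]
    congr 1
    apply Fin.ext
    simp only
    rw [Fin.add_def, Nat.mod_mod_of_dvd _ hdn]
    obtain ⟨t, ht⟩ := hdr
    rw [ht, Nat.add_mul_mod_self_left]
end
section
variable {G : Type*} [Group G]

def prodSplit (e : ℕ) (P : G → Prop) :
    {b : Fin (e+1) → G // P (List.ofFn b).prod} ≃ ((Fin e → G) × {g : G // P g}) where
  toFun b := ⟨fun i => b.val i.succ, ⟨(List.ofFn b.val).prod, b.prop⟩⟩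
  invFun cg := ⟨Fin.cons (cg.2.val * (List.ofFn cg.1).prod⁻¹) cg.1, by
    simp only [List.ofFn_succ, List.prod_cons, Fin.cons_zero, Fin.cons_succ,
      inv_mul_cancel_right]
    exact cg.2.prop⟩
  left_inv b := by
    apply Subtype.ext
    have h : (List.ofFn b.val).prod = b.val 0 * (List.ofFn fun i => b.val i.succ).prod := by
      rw [List.ofFn_succ, List.prod_cons]
    have head : (List.ofFn b.val).prod * (List.ofFn fun i => b.val i.succ).prod⁻¹ = b.val 0 := by
      rw [h, mul_inv_cancel_right]
    show Fin.cons _ _ = b.val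
    rw [head]
    exact Fin.cons_self_tail b.val
  right_inv cg := by
    refine Prod.ext ?_ (Subtype.ext ?_)
    · funext i
      simp
    · show (List.ofFn (Fin.cons _ cg.1)).prod = cg.2.val
      simp only [List.ofFn_succ, List.prod_cons, Fin.cons_zero, Fin.cons_succ,
        inv_mul_cancel_right]

theorem card_subtype_prod_pow [Fintype G] (m e : ℕ) :
    Nat.card {b : Fin (e+1) → G // (List.ofFn b).prod ^ m = 1}
      = Nat.card {g : G // g ^ m = 1} * Fintype.card G ^ e := by
  rw [Nat.card_congr (prodSplit e (fun g => g ^ m = 1)), Nat.card_prod, Nat.card_fun]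
  simp [Nat.card_eq_fintype_card, mul_comm]
end

section
variable {n : ℕ} [NeZero n] {G : Type*} [Group G]

theorem ofFn_rot (a : Fin n → G) (r : Fin n) :
    List.ofFn (fun i => a (i + r)) = (List.ofFn a).rotate r.val := by
  apply List.ext_getElem
  · simp
  · intro i h1 h2
    simp only [List.length_ofFn] at h1
    rw [List.getElem_ofFn, List.getElem_rotate]
    simp only [List.length_ofFn, List.getElem_ofFn]
    congr 1

theorem rot_prod_eq_one (a : Fin n → G) (r : Fin n) (h : (List.ofFn a).prod = 1) :
    (List.ofFn (fun i => a (i + r))).prod = 1 := by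
  rw [ofFn_rot]
  exact List.prod_rotate_eq_one_of_prod_eq_one h r.val

abbrev IdProd (G : Type*) [Group G] (n : ℕ) := {a : Fin n → G // (List.ofFn a).prod = 1}

instance rotAddAction : AddAction (Fin n) (IdProd G n) where
  vadd r a := ⟨fun i => a.val (i + r), rot_prod_eq_one a.val r a.prop⟩
  zero_vadd a := by
    apply Subtype.ext
    funext i
    show a.val (i + 0) = a.val i
    rw [add_zero]
  add_vadd r s a := by
    apply Subtype.ext
    funext i
    show a.val (i + (r + s)) = a.val (i + r + s)
    rw [add_assoc]

theorem vadd_def (r : Fin n) (a : IdProd G n) :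
    (r +ᵥ a).val = fun i => a.val (i + r) := rfl

end

section
variable {n : ℕ} [NeZero n] {G : Type*} [Group G]

theorem take_ofFn_eq (a : Fin n → G) {d : ℕ} (hdle : d ≤ n) :
    (List.ofFn a).take d = List.ofFn (fun j : Fin d => a (Fin.castLE hdle j)) := by
  apply List.ext_getElem
  · simp [hdle]
  · intro i h1 h2
    simp only [List.length_take, List.length_ofFn] at h1
    rw [List.getElem_take, List.getElem_ofFn, List.getElem_ofFn]
    rfl

theorem prod_ofFn_of_periodic (a : Fin n → G) {d : ℕ} (hd : 0 < d) (hdn : d ∣ n)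
    (hlt : ∀ i : Fin n, i.val % d < n)
    (hQ : ∀ i : Fin n, a i = a ⟨i.val % d, hlt i⟩) :
    (List.ofFn a).prod = ((List.ofFn a).take d).prod ^ (n / d) := by
  apply prod_of_periodic d hd (n / d)
  · rw [List.length_ofFn, Nat.div_mul_cancel hdn]
  · intro i h
    rw [List.length_ofFn] at h
    rw [List.getElem_ofFn, List.getElem_ofFn]
    exact hQ ⟨i, h⟩

theorem card_fixedBy_aux (r : Fin n) [Fintype G] {d : ℕ} (hd : 0 < d) (hdn : d ∣ n)
    (hdr : d ∣ r.val) (hgd : n.gcd r.val ∣ d) :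
    Nat.card (AddAction.fixedBy (IdProd G n) r) =
      Nat.card {g : G // g ^ (n / d) = 1} * Fintype.card G ^ (d - 1) := by
  have npos : 0 < n := Nat.pos_of_ne_zero (NeZero.ne n)
  have hdle : d ≤ n := Nat.le_of_dvd npos hdn
  have hlt : ∀ i : Fin n, i.val % d < n := fun i => Nat.lt_of_lt_of_le (Nat.mod_lt _ hd) hdle
  have hmem : ∀ x : IdProd G n, x ∈ AddAction.fixedBy (IdProd G n) r ↔
      ∀ i : Fin n, x.val i = x.val ⟨i.val % d, hlt i⟩ := by
    intro x
    rw [AddAction.mem_fixedBy, ← periodic_iff x.val r hd hdn hdr hgd]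
    rw [Subtype.ext_iff, vadd_def, funext_iff]
  -- periodic functions built from b
  have hQb : ∀ b : Fin d → G, ∀ i : Fin n,
      (fun i : Fin n => b ⟨i.val % d, Nat.mod_lt _ hd⟩) i
        = (fun i : Fin n => b ⟨i.val % d, Nat.mod_lt _ hd⟩) ⟨i.val % d, hlt i⟩ := by
    intro b i
    simp only
    congr 1
    apply Fin.ext
    simp only
    exact (Nat.mod_mod_of_dvd _ dvd_rfl).symm
  have hcast : ∀ b : Fin d → G, ∀ j : Fin d,
      (fun i : Fin n => b ⟨i.val % d, Nat.mod_lt _ hd⟩) (Fin.castLE hdle j) = b j := by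
    intro b j
    simp only
    congr 1
    apply Fin.ext
    simp only [Fin.coe_castLE]
    exact Nat.mod_eq_of_lt j.isLt
  have E : (AddAction.fixedBy (IdProd G n) r) ≃
      {b : Fin d → G // (List.ofFn b).prod ^ (n / d) = 1} := by
    refine
      { toFun := fun x => ⟨fun j => x.val.val (Fin.castLE hdle j), ?_⟩
        invFun := fun b => ⟨⟨fun i => b.val ⟨i.val % d, Nat.mod_lt _ hd⟩, ?_⟩, ?_⟩
        left_inv := ?_, right_inv := ?_ }
    · -- prod ^ (n/d) = 1
      rcases x with ⟨x, hx⟩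
      rw [← take_ofFn_eq x.val hdle,
        ← prod_ofFn_of_periodic x.val hd hdn hlt ((hmem x).1 hx)]
      exact x.prop
    · -- ofFn prod = 1
      have := prod_ofFn_of_periodic (fun i : Fin n => b.val ⟨i.val % d, Nat.mod_lt _ hd⟩)
        hd hdn hlt (hQb b.val)
      rw [take_ofFn_eq _ hdle] at this
      have h2 : (List.ofFn fun j : Fin d =>
          (fun i : Fin n => b.val ⟨i.val % d, Nat.mod_lt _ hd⟩) (Fin.castLE hdle j))
          = List.ofFn b.val := by
        congr 1
        funext j
        exact hcast b.val j
      rw [this, h2]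
      exact b.prop
    · -- fixed
      rw [hmem]
      exact hQb b.val
    · -- left inverse
      rintro ⟨⟨x, hx1⟩, hx2⟩
      apply Subtype.ext
      apply Subtype.ext
      funext i
      show x (Fin.castLE hdle ⟨i.val % d, Nat.mod_lt _ hd⟩) = x i
      have hQ := (hmem ⟨x, hx1⟩).1 hx2
      exact (hQ i).symm
    · -- right inverse
      rintro ⟨b, hb⟩
      apply Subtype.ext
      funext j
      exact hcast b j
  rw [Nat.card_congr E]
  obtain ⟨e, rfl⟩ : ∃ e, d = e + 1 := ⟨d - 1, (Nat.succ_pred_eq_of_pos hd).symm⟩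
  rw [card_subtype_prod_pow]
  simp
end

section
variable {n : ℕ} [NeZero n] {G : Type*} [Group G]

theorem orbitSet_vadd (a : IdProd G n) (r : Fin n) :
    {b : Fin n → G | ∃ s : Fin n, ∀ i, b i = (r +ᵥ a).val (i + s)}
      = {b : Fin n → G | ∃ s : Fin n, ∀ i, b i = a.val (i + s)} := by
  ext b
  constructor
  · rintro ⟨s, hs⟩
    refine ⟨s + r, fun i => ?_⟩
    rw [hs i, vadd_def]
    show a.val (i + s + r) = a.val (i + (s + r))
    rw [add_assoc]
  · rintro ⟨s, hs⟩
    refine ⟨s - r, fun i => ?_⟩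
    rw [hs i, vadd_def]
    show a.val (i + s) = a.val (i + (s - r) + r)
    rw [add_assoc, sub_add_cancel]

theorem card_orbit_sets (G : Type*) [Group G] :
    Nat.card {s : Set (Fin n → G) //
        ∃ a : Fin n → G, (List.ofFn a).prod = 1 ∧
          s = {b : Fin n → G | ∃ r : Fin n, ∀ i : Fin n, b i = a (i + r)}}
      = Nat.card (AddAction.orbitRel.Quotient (Fin n) (IdProd G n)) := by
  apply Nat.card_congr
  symm
  have wd : ∀ (a b : IdProd G n), (AddAction.orbitRel (Fin n) (IdProd G n)).r a b →
      ({c : Fin n → G | ∃ r : Fin n, ∀ i, c i = a.val (i + r)} : Set (Fin n → G))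
        = {c : Fin n → G | ∃ r : Fin n, ∀ i, c i = b.val (i + r)} := by
    intro a b hab
    obtain ⟨r, hr⟩ : ∃ r : Fin n, r +ᵥ b = a := hab
    rw [← hr]
    exact orbitSet_vadd b r
  refine Equiv.ofBijective (Quotient.lift (fun a : IdProd G n =>
      (⟨{c : Fin n → G | ∃ r : Fin n, ∀ i, c i = a.val (i + r)}, a.val, a.prop, rfl⟩ :
        {s : Set (Fin n → G) // ∃ a : Fin n → G, (List.ofFn a).prod = 1 ∧
          s = {b : Fin n → G | ∃ r : Fin n, ∀ i : Fin n, b i = a (i + r)}}))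
      (fun a b hab => Subtype.ext (wd a b hab))) ⟨?_, ?_⟩
  · intro q1 q2
    refine Quotient.inductionOn₂ q1 q2 (fun a b h => ?_)
    have hsets := Subtype.ext_iff.1 h
    simp only [Quotient.lift_mk] at hsets
    have ha : a.val ∈ {c : Fin n → G | ∃ r : Fin n, ∀ i, c i = a.val (i + r)} :=
      ⟨0, fun i => by rw [add_zero]⟩
    rw [hsets] at ha
    obtain ⟨r, hr⟩ := ha
    apply Quotient.sound
    refine ⟨r, ?_⟩
    apply Subtype.ext
    funext i
    exact (hr i).symm
  · rintro ⟨s, a, ha, hs⟩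
    refine ⟨Quotient.mk _ (⟨a, ha⟩ : IdProd G n), ?_⟩
    apply Subtype.ext
    exact hs.symm

theorem burnside_step (G : Type*) [Group G] [Fintype G] :
    Nat.card (AddAction.orbitRel.Quotient (Fin n) (IdProd G n)) * n
      = ∑ r : Fin n, Nat.card (AddAction.fixedBy (IdProd G n) r) := by
  classical
  letI : Fintype (IdProd G n) := Fintype.ofFinite _
  letI : ∀ r : Fin n, Fintype (AddAction.fixedBy (IdProd G n) r) := fun _ => Fintype.ofFinite _
  letI : Fintype (AddAction.orbitRel.Quotient (Fin n) (IdProd G n)) := Fintype.ofFinite _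
  have h := AddAction.sum_card_fixedBy_eq_card_orbits_mul_card_addGroup (Fin n) (IdProd G n)
  rw [Fintype.card_fin] at h
  rw [Nat.card_eq_fintype_card, ← h]
  exact Finset.sum_congr rfl fun r _ => (Nat.card_eq_fintype_card).symm

theorem sum_gcd (f : ℕ → ℕ) :
    ∑ r : Fin n, f (n.gcd r.val) = ∑ d ∈ n.divisors, Nat.totient (n / d) * f d := by
  rw [Fin.sum_univ_eq_sum_range (fun k => f (n.gcd k)) n]
  have hmaps : ∀ k ∈ Finset.range n, n.gcd k ∈ n.divisors := fun k _ =>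
    Nat.mem_divisors.2 ⟨Nat.gcd_dvd_left n k, NeZero.ne n⟩
  rw [← Finset.sum_fiberwise_of_maps_to hmaps (fun k => f (n.gcd k))]
  refine Finset.sum_congr rfl fun d hd => ?_
  have hinner : ∀ k ∈ Finset.filter (fun k => n.gcd k = d) (Finset.range n),
      f (n.gcd k) = f d := fun k hk => by rw [(Finset.mem_filter.1 hk).2]
  rw [Finset.sum_congr rfl hinner, Finset.sum_const, smul_eq_mul]
  congr 1
  exact (Nat.totient_div_of_dvd (Nat.dvd_of_mem_divisors hd)).symm
end

/-- The number of identity-product `n`-necklaces over a finite group `G`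
(orbits of identity-product `n`-tuples under cyclic rotation), multiplied by `n`,
equals `∑_{d ∣ n} φ(n/d) ⬝ [G ÷ (n/d)] ⬝ |G|^(d-1)`. -/
theorem card_identity_product_necklaces (G : Type*) [Group G] [Fintype G]
    (n : ℕ) [NeZero n] :
    Nat.card {s : Set (Fin n → G) //
        ∃ a : Fin n → G, (List.ofFn a).prod = 1 ∧
          s = {b : Fin n → G | ∃ r : Fin n, ∀ i : Fin n, b i = a (i + r)}} * n
      = ∑ d ∈ n.divisors,
          Nat.totient (n / d) * Nat.card {g : G // g ^ (n / d) = 1}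
            * Fintype.card G ^ (d - 1) := by
  have npos : 0 < n := Nat.pos_of_ne_zero (NeZero.ne n)
  rw [card_orbit_sets G, burnside_step G]
  have hfix : ∀ r : Fin n, Nat.card (AddAction.fixedBy (IdProd G n) r)
      = Nat.card {g : G // g ^ (n / n.gcd r.val) = 1}
          * Fintype.card G ^ (n.gcd r.val - 1) := fun r =>
    card_fixedBy_aux r (Nat.gcd_pos_of_pos_left _ npos) (Nat.gcd_dvd_left n r.val)
      (Nat.gcd_dvd_right n r.val) dvd_rfl
  rw [Finset.sum_congr rfl fun r _ => hfix r]
  rw [sum_gcd (fun d => Nat.card {g : G // g ^ (n / d) = 1} * Fintype.card G ^ (d - 1))]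
  exact Finset.sum_congr rfl fun d _ => by ring
end

section
/- Let G = ∏_{i=1}^m C_{k_i} be a finite product of cyclic groups of orders k₁,...,k_m, and n a positive integer. Then the number of orbits under cyclic rotation of n-tuples in Gⁿ whose entries sum (multiply) to the identity equals (1/n) ∑_{d|n} φ(n/d) · ∏_{i=1}^m ( gcd(k_i, n/d) · k_i^{d-1} ). -/
open Finset MulAction
open scoped Fin.CommRing

namespace NecklaceAux

variable {n : ℕ} [NeZero n]

section Periodic

variable {A : Type*}

lemma shift_zsmul {a : Fin n → A} {r : Fin n} (h : ∀ j, a (j + r) = a j)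
    (z : ℤ) (j : Fin n) : a (j + z • r) = a j := by
  induction z using Int.induction_on with
  | zero => simp
  | succ i ih =>
    have key : j + ((i : ℤ) + 1) • r = j + (i : ℤ) • r + r := by
      rw [add_smul, one_zsmul, ← add_assoc]
    rw [key, h, ih]
  | pred i ih =>
    have h2 := h (j + (-(i : ℤ) - 1) • r)
    have key : j + (-(i : ℤ) - 1) • r + r = j + (-(i : ℤ)) • r := by
      rw [add_assoc]
      congr 1
      rw [sub_smul, one_zsmul, sub_add_cancel]
    rw [key] at h2
    rw [← h2]
    exact ih

lemma shift_nsmul {a : Fin n → A} {r : Fin n} (h : ∀ j, a (j + r) = a j)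
    (c : ℕ) (j : Fin n) : a (j + c • r) = a j := by
  have := shift_zsmul h (c : ℤ) j
  rwa [natCast_zsmul] at this

lemma per_gcd {a : Fin n → A} (r : Fin n) :
    (∀ j, a (j + r) = a j) ↔ ∀ j, a (j + ((Nat.gcd r.val n : ℕ) : Fin n)) = a j := by
  constructor
  · intro h j
    have hd : ((Nat.gcd r.val n : ℕ) : Fin n) = (Nat.gcdA r.val n) • r := by
      have hb := congrArg (fun z : ℤ => ((z : ℤ) : Fin n)) (Nat.gcd_eq_gcd_ab r.val n)
      push_cast at hb
      rw [Fin.natCast_self] at hb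
      rw [zsmul_eq_mul, hb]
      ring
    rw [hd]
    exact shift_zsmul h _ j
  · intro h j
    have hr : r = (r.val / Nat.gcd r.val n) • ((Nat.gcd r.val n : ℕ) : Fin n) := by
      rw [nsmul_eq_mul, ← Nat.cast_mul, Nat.div_mul_cancel (Nat.gcd_dvd_left r.val n),
        Fin.cast_val_eq_self]
    rw [show j + r = j + (r.val / Nat.gcd r.val n) • ((Nat.gcd r.val n : ℕ) : Fin n) by
      rw [← hr]]
    exact shift_nsmul h _ j

end Periodic

section Restrict

variable {A : Type*} [AddCommGroup A] {d : ℕ}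

/-- lift a `d`-periodic pattern to `Fin n`. -/
def liftF (hd0 : 0 < d) (b : Fin d → A) : Fin n → A :=
  fun j => b ⟨j.1 % d, Nat.mod_lt _ hd0⟩

lemma liftF_periodic (hd : d ∣ n) (hd0 : 0 < d) (b : Fin d → A) (j : Fin n) :
    liftF hd0 b (j + (d : Fin n)) = liftF hd0 b j := by
  have hn0 : 0 < n := Nat.pos_of_ne_zero (NeZero.ne n)
  have hdn : d ≤ n := Nat.le_of_dvd hn0 hd
  unfold liftF
  congr 1
  apply Fin.ext
  show ((j.1 + (d : Fin n).1) % n) % d = j.1 % d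
  rw [Fin.val_natCast]
  rcases lt_or_eq_of_le hdn with hlt | heq
  · rw [Nat.mod_eq_of_lt hlt, Nat.mod_mod_of_dvd _ hd, Nat.add_mod_right]
  · subst heq
    simp [Nat.mod_self, Nat.mod_eq_of_lt j.2]

lemma lift_res (hd : d ∣ n) (hd0 : 0 < d) {a : Fin n → A}
    (hper : ∀ j, a (j + (d : Fin n)) = a j) (j : Fin n) :
    a j = a (Fin.castLE (Nat.le_of_dvd (Nat.pos_of_ne_zero (NeZero.ne n)) hd)
      ⟨j.1 % d, Nat.mod_lt _ hd0⟩) := by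
  have hn0 : 0 < n := Nat.pos_of_ne_zero (NeZero.ne n)
  have hdn : d ≤ n := Nat.le_of_dvd hn0 hd
  have main : ∀ t (j : Fin n), j.1 = t →
      a j = a (Fin.castLE hdn ⟨j.1 % d, Nat.mod_lt _ hd0⟩) := by
    intro t
    induction t using Nat.strong_induction_on with
    | _ t ih =>
      rintro j rfl
      by_cases hjd : j.1 < d
      · have : Fin.castLE hdn ⟨j.1 % d, Nat.mod_lt _ hd0⟩ = j := by
          apply Fin.ext
          show j.1 % d = j.1
          exact Nat.mod_eq_of_lt hjd
        rw [this]
      · push_neg at hjd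
        have hdn' : d < n := lt_of_le_of_lt hjd j.2
        set j' : Fin n := ⟨j.1 - d, by omega⟩ with hj'
        have hjj : j' + (d : Fin n) = j := by
          apply Fin.ext
          show (j'.1 + (d : Fin n).1) % n = j.1
          rw [Fin.val_natCast, Nat.mod_eq_of_lt hdn']
          show (j.1 - d + d) % n = j.1
          rw [Nat.sub_add_cancel hjd, Nat.mod_eq_of_lt j.2]
        have h1 : a j = a j' := by rw [← hjj, hper]
        have h2 := ih j'.1 (by show j.1 - d < j.1; omega) j' rfl
        rw [h1, h2]
        congr 2
        apply Fin.ext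
        show (j.1 - d) % d = j.1 % d
        exact (Nat.mod_eq_sub_mod hjd).symm
  exact main j.1 j rfl

lemma sum_liftF (hd : d ∣ n) (hd0 : 0 < d) (b : Fin d → A) :
    ∑ j : Fin n, liftF (n := n) hd0 b j = (n / d) • ∑ i, b i := by
  have heq : (n / d) * d = n := Nat.div_mul_cancel hd
  let eqv : Fin (n / d) × Fin d ≃ Fin n := finProdFinEquiv.trans (finCongr heq)
  rw [← Equiv.sum_comp eqv (fun j => liftF hd0 b j)]
  have happ : ∀ p : Fin (n / d) × Fin d, liftF (n := n) hd0 b (eqv p) = b p.2 := by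
    intro p
    unfold liftF
    congr 1
    apply Fin.ext
    show ((eqv p).1) % d = p.2.1
    have : ((eqv p) : ℕ) = p.2.1 + d * p.1.1 := rfl
    rw [this, Nat.add_mul_mod_self_left, Nat.mod_eq_of_lt p.2.2]
  simp only [happ]
  rw [Fintype.sum_prod_type]
  simp [Finset.sum_const, Finset.card_univ, ← Finset.smul_sum]

/-- The restriction equivalence for `d`-periodic zero-sum tuples. -/
noncomputable def periodicEquiv (hd : d ∣ n) (hd0 : 0 < d) :
    {a : Fin n → A // (∑ j, a j = 0) ∧ ∀ j, a (j + ((d : ℕ) : Fin n)) = a j} ≃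
    {b : Fin d → A // (n / d) • (∑ i, b i) = 0} where
  toFun a := ⟨fun i => a.1 (Fin.castLE (Nat.le_of_dvd (Nat.pos_of_ne_zero (NeZero.ne n)) hd) i),
    by
      have hres : liftF (n := n) hd0
          (fun i => a.1 (Fin.castLE (Nat.le_of_dvd (Nat.pos_of_ne_zero (NeZero.ne n)) hd) i))
          = a.1 := by
        funext j
        exact (lift_res hd hd0 a.2.2 j).symm
      have := sum_liftF hd hd0
        (fun i => a.1 (Fin.castLE (Nat.le_of_dvd (Nat.pos_of_ne_zero (NeZero.ne n)) hd) i))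
      rw [hres] at this
      rw [← this]
      exact a.2.1⟩
  invFun b := ⟨liftF hd0 b.1, by
    constructor
    · rw [sum_liftF hd hd0]
      exact b.2
    · exact liftF_periodic hd hd0 b.1⟩
  left_inv a := by
    apply Subtype.ext
    funext j
    exact (lift_res hd hd0 a.2.2 j).symm
  right_inv b := by
    apply Subtype.ext
    funext i
    exact congrArg b.1 (Fin.ext (Nat.mod_eq_of_lt i.2))

end Restrict

section CountSolutions

variable {A : Type*} [AddCommGroup A]

/-- Splitting off the sum condition. -/
noncomputable def sumCondEquiv (d' : ℕ) (e : ℕ) :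
    {b : Fin (d' + 1) → A // e • (∑ i, b i) = 0} ≃
    {s : A // e • s = 0} × (Fin d' → A) where
  toFun b := (⟨∑ i : Fin (d' + 1), b.1 i, b.2⟩, fun i : Fin d' => b.1 i.succ)
  invFun p := ⟨Fin.cons (p.1.1 - ∑ i : Fin d', p.2 i) p.2, by
    rw [Fin.sum_cons, sub_add_cancel]
    exact p.1.2⟩
  left_inv b := by
    apply Subtype.ext
    have hsum : (∑ i : Fin (d' + 1), b.1 i) - ∑ i : Fin d', b.1 i.succ = b.1 0 := by
      rw [Fin.sum_univ_succ]
      abel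
    show Fin.cons ((∑ i : Fin (d' + 1), b.1 i) - ∑ i : Fin d', b.1 i.succ)
      (fun i : Fin d' => b.1 i.succ) = b.1
    rw [hsum]
    exact Fin.cons_self_tail b.1
  right_inv p := by
    refine Prod.ext (Subtype.ext ?_) (funext fun i : Fin d' => ?_)
    · show (∑ i : Fin (d' + 1), Fin.cons (p.1.1 - ∑ i : Fin d', p.2 i) p.2 i) = p.1.1
      rw [Fin.sum_cons, sub_add_cancel]
    · exact @Fin.cons_succ d' (fun _ => A) (p.1.1 - ∑ i : Fin d', p.2 i) p.2 i

lemma card_zmod_smul_eq_zero (k e : ℕ) (hk : k ≠ 0) :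
    Nat.card {x : ZMod k // e • x = 0} = Nat.gcd k e := by
  haveI : NeZero k := ⟨hk⟩
  have hg0 : 0 < Nat.gcd k e := Nat.gcd_pos_of_pos_left _ (Nat.pos_of_ne_zero hk)
  obtain ⟨k', hk'⟩ := Nat.gcd_dvd_left k e
  obtain ⟨e', he'⟩ := Nat.gcd_dvd_right k e
  have hk'0 : 0 < k' := by
    rcases Nat.eq_zero_or_pos k' with h | h
    · exact absurd (by rw [hk', h, mul_zero]) hk
    · exact h
  have hco : Nat.Coprime k' e' := by
    have h := Nat.coprime_div_gcd_div_gcd (m := k) (n := e) hg0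
    have e1 : k / Nat.gcd k e = k' := Nat.div_eq_of_eq_mul_right hg0 hk'
    have e2 : e / Nat.gcd k e = e' := Nat.div_eq_of_eq_mul_right hg0 he'
    rwa [e1, e2] at h
  have hrep : ∀ x : ZMod k, ((e * x.val : ℕ) : ZMod k) = e • x := by
    intro x
    rw [Nat.cast_mul, ZMod.natCast_val, ZMod.cast_id, ← nsmul_eq_mul]
  have hdvd : ∀ x : ZMod k, (e • x = 0 ↔ k ∣ e * x.val) := by
    intro x
    rw [← hrep, ZMod.natCast_eq_zero_iff]
  have hbound : ∀ t : Fin (Nat.gcd k e), t.1 * k' < k := by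
    intro t
    calc t.1 * k' < Nat.gcd k e * k' := (Nat.mul_lt_mul_right hk'0).mpr t.2
      _ = k := hk'.symm
  have hmem : ∀ t : Fin (Nat.gcd k e), e • (((t.1 * k' : ℕ) : ZMod k)) = 0 := by
    intro t
    rw [hdvd, ZMod.val_natCast_of_lt (hbound t)]
    refine ⟨e' * t.1, ?_⟩
    have h1 : e * (t.1 * k') = (Nat.gcd k e * e') * (t.1 * k') := by rw [← he']
    have h2 : (Nat.gcd k e * e') * (t.1 * k') = (Nat.gcd k e * k') * (e' * t.1) := by ring
    have h3 : (Nat.gcd k e * k') * (e' * t.1) = k * (e' * t.1) := by rw [← hk']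
    exact h1.trans (h2.trans h3)
  have key := Nat.card_eq_of_bijective
    (fun t : Fin (Nat.gcd k e) => (⟨((t.1 * k' : ℕ) : ZMod k), hmem t⟩ : {x : ZMod k // e • x = 0}))
    (by
      constructor
      · intro t1 t2 ht
        have h2 : ((t1.1 * k' : ℕ) : ZMod k) = ((t2.1 * k' : ℕ) : ZMod k) :=
          Subtype.ext_iff.mp ht
        have h3 := congrArg ZMod.val h2
        rw [ZMod.val_natCast_of_lt (hbound t1), ZMod.val_natCast_of_lt (hbound t2)] at h3
        exact Fin.ext (Nat.eq_of_mul_eq_mul_right hk'0 h3)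
      · rintro ⟨x, hx⟩
        have hx2 : k ∣ e * x.val := (hdvd x).mp hx
        have hx3 : Nat.gcd k e * k' ∣ Nat.gcd k e * (e' * x.val) := by
          rw [← hk', ← mul_assoc, ← he']
          exact hx2
        have hx4 : k' ∣ e' * x.val := (mul_dvd_mul_iff_left hg0.ne').mp hx3
        have hx5 : k' ∣ x.val := Nat.Coprime.dvd_of_dvd_mul_left hco hx4
        obtain ⟨c, hc⟩ := hx5
        have hck : k' * c < k := by rw [← hc]; exact x.val_lt
        have hcg : c < Nat.gcd k e := by
          by_contra hcg
          push_neg at hcg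
          have : k ≤ k' * c := by
            calc k = Nat.gcd k e * k' := hk'
              _ ≤ c * k' := Nat.mul_le_mul_right _ hcg
              _ = k' * c := mul_comm _ _
          omega
        refine ⟨⟨c, hcg⟩, Subtype.ext ?_⟩
        show ((c * k' : ℕ) : ZMod k) = x
        rw [mul_comm, ← hc, ZMod.natCast_val, ZMod.cast_id])
  rw [← key, Nat.card_eq_fintype_card, Fintype.card_fin]


lemma card_periodic_sum_zero (A : Type*) [AddCommGroup A] [Fintype A] (d e : ℕ) (hd0 : 0 < d) :
    Nat.card {b : Fin d → A // e • (∑ i, b i) = 0} =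
      Nat.card {s : A // e • s = 0} * (Fintype.card A) ^ (d - 1) := by
  obtain ⟨d', rfl⟩ : ∃ d', d = d' + 1 := ⟨d - 1, (Nat.succ_pred_eq_of_pos hd0).symm⟩
  rw [Nat.card_congr (sumCondEquiv d' e), Nat.card_prod, Nat.card_fun,
    Nat.card_eq_fintype_card (α := Fin d'), Fintype.card_fin,
    Nat.card_eq_fintype_card (α := A)]
  simp

lemma card_pi_smul_eq_zero (m : ℕ) (k : Fin m → ℕ) (hk : ∀ i, 0 < k i) (e : ℕ) :
    Nat.card {s : ((i : Fin m) → ZMod (k i)) // e • s = 0} = ∏ i, Nat.gcd (k i) e := by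
  haveI : ∀ i, NeZero (k i) := fun i => ⟨(hk i).ne'⟩
  have h1 : ∀ s : (i : Fin m) → ZMod (k i), (e • s = 0 ↔ ∀ i, e • s i = 0) := by
    intro s
    rw [funext_iff]
    exact forall_congr' fun i => by rw [Pi.smul_apply, Pi.zero_apply]
  calc Nat.card {s : ((i : Fin m) → ZMod (k i)) // e • s = 0}
      = Nat.card ((i : Fin m) → {x : ZMod (k i) // e • x = 0}) :=
        Nat.card_congr ((Equiv.subtypeEquivRight h1).trans
          (Equiv.subtypePiEquivPi (p := fun i (x : ZMod (k i)) => e • x = 0)))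
    _ = ∏ i, Nat.card {x : ZMod (k i) // e • x = 0} := Nat.card_pi
    _ = ∏ i, Nat.gcd (k i) e :=
        Finset.prod_congr rfl fun i _ => card_zmod_smul_eq_zero (k i) e (hk i).ne'

end CountSolutions

end NecklaceAux

open NecklaceAux

/-- For `G = ∏_{i=1}^m C_{k_i}` a product of cyclic groups, the number of
zero-sum `n`-necklaces (orbits under cyclic rotation of `n`-tuples summing to `0`),
multiplied by `n`, equals `∑_{d ∣ n} φ(n/d) ⬝ ∏_i (gcd(k_i, n/d) ⬝ k_i^(d-1))`. -/
theorem card_identity_product_necklaces_product_cyclic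
    (m : ℕ) (k : Fin m → ℕ) (hk : ∀ i, 0 < k i) (n : ℕ) [NeZero n] :
    Nat.card {s : Set (Fin n → ((i : Fin m) → ZMod (k i))) //
        ∃ a : Fin n → ((i : Fin m) → ZMod (k i)), (∑ j : Fin n, a j = 0) ∧
          s = {b | ∃ r : Fin n, ∀ j : Fin n, b j = a (j + r)}} * n
      = ∑ d ∈ n.divisors,
          Nat.totient (n / d) * ∏ i : Fin m, (Nat.gcd (k i) (n / d) * (k i) ^ (d - 1)) := by
  classical
  haveI : ∀ i, NeZero (k i) := fun i => ⟨(hk i).ne'⟩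
  set A := (i : Fin m) → ZMod (k i) with hA
  set Z := {a : Fin n → A // ∑ j : Fin n, a j = 0} with hZ
  -- the rotation action
  letI act : MulAction (Multiplicative (Fin n)) Z :=
    { smul := fun g a => ⟨fun j => a.1 (j + g.toAdd), by
        rw [show ∑ j : Fin n, a.1 (j + g.toAdd) = ∑ j, a.1 j from
          Fintype.sum_equiv (Equiv.addRight g.toAdd) _ _ fun j => rfl]
        exact a.2⟩
      one_smul := fun a => Subtype.ext (funext fun j => by
        show a.1 (j + 0) = a.1 j
        rw [add_zero])
      mul_smul := fun g h a => Subtype.ext (funext fun j => by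
        show a.1 (j + (g.toAdd + h.toAdd)) = a.1 (j + g.toAdd + h.toAdd)
        rw [add_assoc]) }
  -- the orbit space is in bijection with the set of necklaces
  have horb : Nat.card {s : Set (Fin n → A) //
        ∃ a : Fin n → A, (∑ j : Fin n, a j = 0) ∧
          s = {b | ∃ r : Fin n, ∀ j : Fin n, b j = a (j + r)}}
      = Nat.card (Quotient (orbitRel (Multiplicative (Fin n)) Z)) := by
    refine (Nat.card_congr (Equiv.ofBijective
      (fun q => Quotient.liftOn q
        (fun z => (⟨{b | ∃ r : Fin n, ∀ j : Fin n, b j = z.1 (j + r)}, ⟨z.1, z.2, rfl⟩⟩ :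
          {s : Set (Fin n → A) // ∃ a : Fin n → A, (∑ j : Fin n, a j = 0) ∧
            s = {b | ∃ r : Fin n, ∀ j : Fin n, b j = a (j + r)}})) ?_)
      ⟨?_, ?_⟩)).symm
    · intro z1 z2 h12
      have h12' : z1 ∈ MulAction.orbit (Multiplicative (Fin n)) z2 := h12
      obtain ⟨g, hg⟩ := mem_orbit_iff.mp h12'
      apply Subtype.ext
      show {b : Fin n → A | ∃ r : Fin n, ∀ j : Fin n, b j = z1.1 (j + r)}
        = {b : Fin n → A | ∃ r : Fin n, ∀ j : Fin n, b j = z2.1 (j + r)}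
      have hz : ∀ j, z1.1 j = z2.1 (j + g.toAdd) :=
        fun j => (congrFun (congrArg Subtype.val hg) j).symm
      ext b
      constructor
      · rintro ⟨r, hb⟩
        refine ⟨r + g.toAdd, fun j => ?_⟩
        rw [hb j, hz (j + r)]
        congr 1
        rw [add_assoc]
      · rintro ⟨r, hb⟩
        refine ⟨r - g.toAdd, fun j => ?_⟩
        rw [hb j, hz (j + (r - g.toAdd))]
        congr 1
        rw [add_assoc, sub_add_cancel]
    · intro q1 q2 h
      obtain ⟨z1, rfl⟩ := Quotient.exists_rep q1
      obtain ⟨z2, rfl⟩ := Quotient.exists_rep q2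
      apply Quotient.sound
      have h'' : ({b | ∃ r : Fin n, ∀ j : Fin n, b j = z1.1 (j + r)} : Set (Fin n → A))
          = {b | ∃ r : Fin n, ∀ j : Fin n, b j = z2.1 (j + r)} := Subtype.ext_iff.mp h
      have hz1 : z1.1 ∈ ({b | ∃ r : Fin n, ∀ j : Fin n, b j = z1.1 (j + r)} : Set (Fin n → A)) :=
        ⟨0, fun j => by rw [add_zero]⟩
      rw [h''] at hz1
      obtain ⟨r, hr⟩ := hz1
      show z1 ∈ MulAction.orbit (Multiplicative (Fin n)) z2
      exact mem_orbit_iff.mpr ⟨Multiplicative.ofAdd r, Subtype.ext (funext fun j => (hr j).symm)⟩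
    · rintro ⟨s, a, hsum, rfl⟩
      exact ⟨⟦⟨a, hsum⟩⟧, rfl⟩
  -- Burnside
  haveI : Fintype Z := Subtype.fintype _
  have hburn := MulAction.sum_card_fixedBy_eq_card_orbits_mul_card_group
    (Multiplicative (Fin n)) Z
  have hn : Fintype.card (Multiplicative (Fin n)) = n :=
    (Fintype.card_congr Multiplicative.toAdd).trans (Fintype.card_fin n)
  -- fixed point counts
  have hfix : ∀ r : Fin n,
      Fintype.card (fixedBy Z (Multiplicative.ofAdd r)) =
        (∏ i, Nat.gcd (k i) (n / Nat.gcd r.val n)) * (∏ i, k i) ^ (Nat.gcd r.val n - 1) := by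
    intro r
    rw [← Nat.card_eq_fintype_card]
    have hd0 : 0 < Nat.gcd r.val n :=
      Nat.gcd_pos_of_pos_right _ (Nat.pos_of_ne_zero (NeZero.ne n))
    have hddvd : Nat.gcd r.val n ∣ n := Nat.gcd_dvd_right _ _
    have e1 : fixedBy Z (Multiplicative.ofAdd r) ≃
        {a : Fin n → A // (∑ j : Fin n, a j = 0) ∧ ∀ j, a (j + r) = a j} :=
      { toFun := fun x => ⟨x.1.1, x.1.2, fun j => congrFun (congrArg Subtype.val x.2) j⟩
        invFun := fun y => ⟨⟨y.1, y.2.1⟩, Subtype.ext (funext fun j => y.2.2 j)⟩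
        left_inv := fun x => rfl
        right_inv := fun y => rfl }
    have e2 : {a : Fin n → A // (∑ j : Fin n, a j = 0) ∧ ∀ j, a (j + r) = a j} ≃
        {a : Fin n → A // (∑ j : Fin n, a j = 0) ∧
          ∀ j, a (j + ((Nat.gcd r.val n : ℕ) : Fin n)) = a j} :=
      Equiv.subtypeEquivRight fun a => and_congr_right fun _ => per_gcd r
    rw [Nat.card_congr e1, Nat.card_congr e2,
      Nat.card_congr (periodicEquiv (A := A) hddvd hd0),
      card_periodic_sum_zero A _ _ hd0,
      card_pi_smul_eq_zero m k hk (n / Nat.gcd r.val n)]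
    congr 1
    rw [show Fintype.card A = ∏ i, k i from by
      rw [Fintype.card_pi]; exact Finset.prod_congr rfl fun i _ => ZMod.card (k i)]
  -- Burnside
  have hburn := MulAction.sum_card_fixedBy_eq_card_orbits_mul_card_group
    (G := Multiplicative (Fin n)) (X := Z)
  rw [hn] at hburn
  rw [horb, Nat.card_eq_fintype_card, ← hburn]
  have hsum1 : ∑ g : Multiplicative (Fin n), Fintype.card (fixedBy Z g)
      = ∑ r : Fin n,
        (∏ i, Nat.gcd (k i) (n / Nat.gcd r.val n)) * (∏ i, k i) ^ (Nat.gcd r.val n - 1) :=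
    (Fintype.sum_equiv (Multiplicative.ofAdd (α := Fin n))
      (fun r : Fin n =>
        (∏ i, Nat.gcd (k i) (n / Nat.gcd r.val n)) * (∏ i, k i) ^ (Nat.gcd r.val n - 1))
      (fun g => Fintype.card (fixedBy Z g))
      (fun r => (hfix r).symm)).symm
  rw [hsum1]
  rw [Fin.sum_univ_eq_sum_range
    (fun t => (∏ i, Nat.gcd (k i) (n / Nat.gcd t n)) * (∏ i, k i) ^ (Nat.gcd t n - 1)) n]
  rw [← Finset.sum_fiberwise_of_maps_to (g := fun t => Nat.gcd t n) (t := n.divisors)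
    (fun x _ => Nat.mem_divisors.mpr ⟨Nat.gcd_dvd_right x n, NeZero.ne n⟩)
    (fun t => (∏ i, Nat.gcd (k i) (n / Nat.gcd t n)) * (∏ i, k i) ^ (Nat.gcd t n - 1))]
  apply Finset.sum_congr rfl
  intro d hd
  obtain ⟨hdd, -⟩ := Nat.mem_divisors.mp hd
  have hcard : #{t ∈ Finset.range n | Nat.gcd t n = d} = Nat.totient (n / d) := by
    rw [Nat.totient_div_of_dvd hdd]
    apply congrArg Finset.card
    apply Finset.filter_congr
    intro t _
    rw [Nat.gcd_comm]
  calc ∑ t ∈ Finset.range n with Nat.gcd t n = d,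
        (∏ i, Nat.gcd (k i) (n / Nat.gcd t n)) * (∏ i, k i) ^ (Nat.gcd t n - 1)
      = ∑ t ∈ Finset.range n with Nat.gcd t n = d,
        (∏ i, Nat.gcd (k i) (n / d)) * (∏ i, k i) ^ (d - 1) := by
        apply Finset.sum_congr rfl
        intro t ht
        rw [(Finset.mem_filter.mp ht).2]
    _ = #{t ∈ Finset.range n | Nat.gcd t n = d} *
        ((∏ i, Nat.gcd (k i) (n / d)) * (∏ i, k i) ^ (d - 1)) := by
        rw [Finset.sum_const, smul_eq_mul]
    _ = Nat.totient (n / d) * ∏ i, (Nat.gcd (k i) (n / d) * (k i) ^ (d - 1)) := by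
        rw [hcard, Finset.prod_mul_distrib, Finset.prod_pow]
end

section
/- Let G be a finite group and n a positive integer. The number of aperiodic identity-product n-necklaces, i.e., |Pₙ|/n where Pₙ is the set of identity-product n-tuples with smallest period n, equals (1/n) ∑_{d|n} μ(n/d) · [G ÷ (n/d)] · |G|^{d-1}. -/
open List
open Fin.NatCast

namespace CardAperiodicAux

variable {G : Type*} [Group G] [Fintype G] {n : ℕ} [NeZero n]

/-- `a` is fixed by the cyclic shift by `j`. -/
def Fixes (a : Fin n → G) (j : ℕ) : Prop := ∀ i : Fin n, a (i + (j : Fin n)) = a i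

lemma fixes_zero (a : Fin n → G) : Fixes a 0 := by intro i; simp

lemma fixes_n (a : Fin n → G) : Fixes a n := by intro i; simp

lemma fixes_add {a : Fin n → G} {j k : ℕ} (hj : Fixes a j) (hk : Fixes a k) :
    Fixes a (j + k) := by
  intro i
  have : ((j + k : ℕ) : Fin n) = (j : Fin n) + (k : Fin n) := by push_cast; ring
  rw [this, ← add_assoc]
  rw [show i + (j : Fin n) + (k : Fin n) = (i + j) + k from rfl, hk, hj]

lemma fixes_mul {a : Fin n → G} {j : ℕ} (hj : Fixes a j) (k : ℕ) : Fixes a (k * j) := by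
  induction k with
  | zero => simpa using fixes_zero a
  | succ k ih => rw [Nat.succ_mul]; exact fixes_add ih hj

lemma fixes_sub {a : Fin n → G} {j k : ℕ} (hkj : k ≤ j) (hj : Fixes a j) (hk : Fixes a k) :
    Fixes a (j - k) := by
  intro i
  have h1 : (i + ((j - k : ℕ) : Fin n)) + (k : Fin n) = i + (j : Fin n) := by
    rw [add_assoc]
    congr 1
    rw [show ((j - k : ℕ) : Fin n) + (k : Fin n) = ((j - k + k : ℕ) : Fin n) by push_cast; ring,
      Nat.sub_add_cancel hkj]
  calc a (i + ((j - k : ℕ) : Fin n))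
      = a ((i + ((j - k : ℕ) : Fin n)) + (k : Fin n)) := (hk _).symm
    _ = a (i + (j : Fin n)) := by rw [h1]
    _ = a i := hj i

/-- The smallest period of `a`. -/
noncomputable def per (a : Fin n → G) : ℕ := sInf {j | 0 < j ∧ Fixes a j}

lemma per_mem (a : Fin n → G) : 0 < per a ∧ Fixes a (per a) := by
  have hne : {j | 0 < j ∧ Fixes a j}.Nonempty :=
    ⟨n, Nat.pos_of_ne_zero (NeZero.ne n), fixes_n a⟩
  exact Nat.sInf_mem hne

lemma per_pos (a : Fin n → G) : 0 < per a := (per_mem a).1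

lemma per_fixes (a : Fin n → G) : Fixes a (per a) := (per_mem a).2

lemma per_le {a : Fin n → G} {j : ℕ} (hj : 0 < j) (h : Fixes a j) : per a ≤ j :=
  Nat.sInf_le ⟨hj, h⟩

lemma per_dvd {a : Fin n → G} : ∀ {j : ℕ}, Fixes a j → per a ∣ j := by
  intro j
  induction j using Nat.strong_induction_on with
  | _ j ih =>
    intro hj
    rcases Nat.eq_zero_or_pos j with h0 | h0
    · simp [h0]
    · have hle : per a ≤ j := per_le h0 hj
      have hsub : Fixes a (j - per a) := fixes_sub hle hj (per_fixes a)
      have hlt : j - per a < j := Nat.sub_lt h0 (per_pos a)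
      have : per a ∣ j - per a := ih _ hlt hsub
      have := Nat.dvd_add this (dvd_refl (per a))
      rwa [Nat.sub_add_cancel hle] at this

lemma fixes_of_per_dvd {a : Fin n → G} {j : ℕ} (h : per a ∣ j) : Fixes a j := by
  obtain ⟨k, rfl⟩ := h
  rw [mul_comm]
  exact fixes_mul (per_fixes a) k

lemma per_dvd_n (a : Fin n → G) : per a ∣ n := per_dvd (fixes_n a)

lemma per_eq_n_iff (a : Fin n → G) :
    per a = n ↔ ∀ j : ℕ, 0 < j → j < n → ¬ Fixes a j := by
  constructor
  · intro h j hj0 hjn hfix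
    have := per_le hj0 hfix
    omega
  · intro h
    have h1 : per a ≤ n := Nat.le_of_dvd (Nat.pos_of_ne_zero (NeZero.ne n)) (per_dvd_n a)
    rcases lt_or_eq_of_le h1 with h2 | h2
    · exact absurd (per_fixes a) (h _ (per_pos a) h2)
    · exact h2

/-- Key pointwise lemma: a `d`-periodic tuple is determined by its first `d` entries. -/
lemma eq_mod {a : Fin n → G} {d : ℕ} (hd : 0 < d) (hdn : d ≤ n) (hfix : Fixes a d)
    (i : Fin n) : a (Fin.castLE hdn ⟨i.1 % d, Nat.mod_lt _ hd⟩) = a i := by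
  have hx : Fin.castLE hdn ⟨i.1 % d, Nat.mod_lt _ hd⟩ = ((i.1 % d : ℕ) : Fin n) := by
    apply Fin.ext
    simp [Fin.val_natCast, Nat.mod_eq_of_lt (lt_of_lt_of_le (Nat.mod_lt _ hd) hdn)]
  have hmul : Fixes a (i.1 / d * d) := fixes_mul hfix _
  have := hmul ((i.1 % d : ℕ) : Fin n)
  rw [hx]
  calc a (((i.1 % d : ℕ) : Fin n))
      = a (((i.1 % d : ℕ) : Fin n) + ((i.1 / d * d : ℕ) : Fin n)) := (hmul _).symm
    _ = a i := by
        congr 1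
        rw [show ((i.1 % d : ℕ) : Fin n) + ((i.1 / d * d : ℕ) : Fin n)
            = ((i.1 % d + i.1 / d * d : ℕ) : Fin n) by push_cast; ring,
          Nat.mod_add_div' i.1 d, Fin.cast_val_eq_self]

lemma prod_map_prod {M : Type*} [Monoid M] (p : M) :
    ∀ (L : List (List M)), (∀ x ∈ L, x.prod = p) → (L.map List.prod).prod = p ^ L.length
  | [], _ => by simp
  | (x :: L), h => by
    simp only [List.map_cons, List.prod_cons, List.length_cons, pow_succ']
    rw [h x List.mem_cons_self,
      prod_map_prod p L (fun y hy => h y (List.mem_cons_of_mem x hy))]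

lemma prod_ofFn_mod {d : ℕ} (hd : 0 < d) (b : Fin d → G) (m : ℕ) :
    (List.ofFn (fun i : Fin (m * d) => b ⟨i.1 % d, Nat.mod_lt _ hd⟩)).prod
      = (List.ofFn b).prod ^ m := by
  rw [List.ofFn_mul, List.prod_flatten]
  refine (prod_map_prod (List.ofFn b).prod _ ?_).trans ?_
  · intro x hx
    rw [List.mem_ofFn] at hx
    obtain ⟨i, rfl⟩ := hx
    have hfn : (fun j : Fin d => b ⟨(i.1 * d + j.1) % d, Nat.mod_lt _ hd⟩) = b := by
      funext j
      congr 1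
      apply Fin.ext
      show (i.1 * d + j.1) % d = j.1
      rw [Nat.mul_comm, Nat.mul_add_mod, Nat.mod_eq_of_lt j.2]
    exact congrArg List.prod (congrArg List.ofFn hfn)
  · rw [List.length_ofFn]

end CardAperiodicAux

open CardAperiodicAux in
/-- The number `|Pₙ|` of aperiodic identity-product `n`-tuples (so that `|Pₙ|/n` is
the number of aperiodic identity-product `n`-necklaces) equals
`∑_{d ∣ n} μ(n/d) ⬝ [G ÷ (n/d)] ⬝ |G|^(d-1)`. -/
theorem card_aperiodic_identity_product_tuples (G : Type*) [Group G] [Fintype G]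
    (n : ℕ) [NeZero n] :
    (Nat.card {a : Fin n → G //
        (List.ofFn a).prod = 1 ∧
          ∀ j : ℕ, 0 < j → j < n → ¬ (∀ i : Fin n, a (i + (j : Fin n)) = a i)} : ℤ)
      = ∑ d ∈ n.divisors,
          ArithmeticFunction.moebius (n / d)
            * (Nat.card {g : G // g ^ (n / d) = 1} : ℤ)
            * (Fintype.card G : ℤ) ^ (d - 1) := by
  classical
  have hn : 0 < n := Nat.pos_of_ne_zero (NeZero.ne n)
  -- the two counting functions
  set F : ℕ → ℤ := fun d =>
    (Nat.card {a : Fin n → G // (List.ofFn a).prod = 1 ∧ Fixes a d} : ℤ) with hF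
  set Gf : ℕ → ℤ := fun d =>
    (Nat.card {a : Fin n → G // (List.ofFn a).prod = 1 ∧ per a = d} : ℤ) with hGf
  -- Lemma A : F d = ∑_{e ∣ d} Gf e for all d > 0
  have lemA : ∀ d > 0, ∑ e ∈ Nat.divisors d, Gf e = F d := by
    intro d hd
    have h1 : ∀ (P : (Fin n → G) → Prop) [DecidablePred P],
        (Nat.card {a : Fin n → G // P a} : ℤ)
          = ((Finset.univ.filter P).card : ℤ) := by
      intro P _
      rw [Nat.card_eq_fintype_card, Fintype.card_subtype]
    simp only [hF, hGf]
    rw [h1]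
    rw [Finset.card_eq_sum_card_fiberwise
      (f := fun a : Fin n → G => per a) (t := Nat.divisors d)
      (fun a ha => by
        simp only [Finset.mem_coe, Finset.mem_filter] at ha
        exact Nat.mem_divisors.2 ⟨per_dvd ha.2.2, hd.ne'⟩)]
    push_cast
    apply Finset.sum_congr rfl
    intro e he
    rw [h1]
    rw [Finset.filter_filter]
    congr 1
    congr 1
    apply Finset.filter_congr
    intro a _
    constructor
    · rintro ⟨h1', h3'⟩
      exact ⟨⟨h1', fixes_of_per_dvd (h3' ▸ (Nat.mem_divisors.1 he).1)⟩, h3'⟩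
    · rintro ⟨⟨h1', _⟩, h3'⟩
      exact ⟨h1', h3'⟩
  -- Lemma C : F d = [G ÷ n/d] * |G|^(d-1) for d ∣ n
  have lemC : ∀ d ∈ n.divisors,
      F d = (Nat.card {g : G // g ^ (n / d) = 1} : ℤ) * (Fintype.card G : ℤ) ^ (d - 1) := by
    intro d hd
    obtain ⟨hdvd, -⟩ := Nat.mem_divisors.1 hd
    have hdpos : 0 < d := Nat.pos_of_dvd_of_pos hdvd hn
    have hdn : d ≤ n := Nat.le_of_dvd hn hdvd
    set m := n / d with hm
    have hnmd : n = m * d := by rw [hm, Nat.div_mul_cancel hdvd]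
    -- E1 : periodic identity-product tuples ≃ d-tuples whose product is an (n/d)-th root of 1
    have prod_mod : ∀ b : Fin d → G,
        (List.ofFn (fun i : Fin n => b ⟨i.1 % d, Nat.mod_lt _ hdpos⟩)).prod
          = (List.ofFn b).prod ^ m := by
      intro b
      rw [List.ofFn_congr hnmd]
      exact prod_ofFn_mod hdpos b m
    have E1 : {a : Fin n → G // (List.ofFn a).prod = 1 ∧ Fixes a d}
        ≃ {b : Fin d → G // (List.ofFn b).prod ^ m = 1} := by
      refine
        { toFun := fun a => ⟨fun j => a.1 (Fin.castLE hdn j), ?_⟩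
          invFun := fun b => ⟨fun i => b.1 ⟨i.1 % d, Nat.mod_lt _ hdpos⟩, ?_, ?_⟩
          left_inv := ?_
          right_inv := ?_ }
      · -- product condition forward
        obtain ⟨a, ha1, hafix⟩ := a
        have : a = fun i : Fin n =>
            (fun j : Fin d => a (Fin.castLE hdn j)) ⟨i.1 % d, Nat.mod_lt _ hdpos⟩ := by
          funext i
          exact (eq_mod hdpos hdn hafix i).symm
        rw [← prod_mod, ← this, ha1]
      · -- product condition backward
        rw [prod_mod b.1, b.2]
      · -- Fixes backward
        intro i
        have hv : (i + (d : Fin n)).1 % d = i.1 % d := by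
          have h1 : (i + (d : Fin n)).1 = (i.1 + d) % n := by
            simp [Fin.add_def, Fin.val_natCast, Nat.add_mod]
          rw [h1, Nat.mod_mod_of_dvd _ hdvd, Nat.add_mod_right]
        exact congrArg b.1 (Fin.ext hv)
      · -- left inverse
        rintro ⟨a, ha1, hafix⟩
        apply Subtype.ext
        funext i
        exact eq_mod hdpos hdn hafix i
      · -- right inverse
        rintro ⟨b, hb⟩
        apply Subtype.ext
        funext j
        have hv : (Fin.castLE hdn j).1 % d = j.1 := Nat.mod_eq_of_lt j.2
        have hj : (⟨(Fin.castLE hdn j).1 % d, Nat.mod_lt _ hdpos⟩ : Fin d) = j := Fin.ext hv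
        exact congrArg b hj
    -- E2 : split off the last coordinate
    obtain ⟨k, rfl⟩ : ∃ k, d = k + 1 := ⟨d - 1, by omega⟩
    have prod_snoc : ∀ (c : Fin k → G) (x : G),
        (List.ofFn (Fin.snoc c x : Fin (k + 1) → G)).prod = (List.ofFn c).prod * x := by
      intro c x
      rw [List.ofFn_succ', List.prod_concat]
      have ha : (fun i : Fin k => (Fin.snoc c x : Fin (k + 1) → G) i.castSucc) = c := by
        funext i; simp
      rw [ha, Fin.snoc_last]
    have E2 : {b : Fin (k + 1) → G // (List.ofFn b).prod ^ m = 1}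
        ≃ (Fin k → G) × {g : G // g ^ m = 1} := by
      refine
        { toFun := fun b => (Fin.init b.1, ⟨(List.ofFn b.1).prod, b.2⟩)
          invFun := fun p => ⟨Fin.snoc p.1 (((List.ofFn p.1).prod)⁻¹ * p.2.1), ?_⟩
          left_inv := ?_
          right_inv := ?_ }
      · rw [prod_snoc, mul_inv_cancel_left, p.2.2]
      · rintro ⟨b, hb⟩
        apply Subtype.ext
        simp only
        have : (List.ofFn b).prod = (List.ofFn (Fin.init b)).prod * b (Fin.last k) := by
          rw [List.ofFn_succ', List.prod_concat]
          rfl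
        rw [this, inv_mul_cancel_left, Fin.snoc_init_self]
      · rintro ⟨c, g, hg⟩
        refine Prod.ext ?_ (Subtype.ext ?_)
        · simp [Fin.init_snoc]
        · simp only
          rw [prod_snoc, mul_inv_cancel_left]
    have : F (k + 1) = ((Nat.card {g : G // g ^ m = 1} * Fintype.card G ^ k : ℕ) : ℤ) := by
      simp only [hF]
      congr 1
      rw [Nat.card_congr (E1.trans E2), Nat.card_prod, Nat.card_fun]
      simp [Nat.card_eq_fintype_card, mul_comm]
    rw [this]
    push_cast
    simp
  -- Möbius inversion
  have inv := (ArithmeticFunction.sum_eq_iff_sum_mul_moebius_eq (f := Gf) (g := F)).1 lemA n hn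
  have lhs_eq : (Nat.card {a : Fin n → G //
      (List.ofFn a).prod = 1 ∧
        ∀ j : ℕ, 0 < j → j < n → ¬ (∀ i : Fin n, a (i + (j : Fin n)) = a i)} : ℤ) = Gf n := by
    simp only [hGf]
    congr 1
    apply Nat.card_congr
    apply Equiv.subtypeEquivRight
    intro a
    apply and_congr_right
    intro _
    rw [per_eq_n_iff]
    rfl
  simp only [Int.cast_id] at inv
  rw [lhs_eq, ← inv,
    Nat.sum_divisorsAntidiagonal' (f := fun u v => ArithmeticFunction.moebius u * F v)]
  apply Finset.sum_congr rfl
  intro d hd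
  rw [lemC d hd, mul_assoc]
end

section
/- Let G be a finite group and n, k positive integers with k | n. The number of identity-product n-necklaces with smallest period k equals (1/k) ∑_{d|k} μ(k/d) · [G ÷ (n/d)] · |G|^{d-1}. -/
open Fin.NatCast

set_option linter.unusedSectionVars false
set_option maxHeartbeats 1000000

namespace NecklaceAux

open Fin.CommRing

variable {G : Type*} [Group G] {n : ℕ} [NeZero n]

/-- The shift-invariance subgroup of a function on `Fin n`. -/
def stab (a : Fin n → G) : AddSubgroup (Fin n) where
  carrier := {x | ∀ i, a (i + x) = a i}
  zero_mem' := by intro i; simp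
  add_mem' := by
    intro x y hx hy i
    rw [← add_assoc, hy, hx]
  neg_mem' := by
    intro x hx i
    have h2 := hx (i + -x)
    rw [neg_add_cancel_right] at h2
    exact h2.symm

def hasPeriod (a : Fin n → G) (m : ℕ) : Prop := ∀ i, a (i + (m : Fin n)) = a i

theorem hasPeriod_iff_mem {a : Fin n → G} {m : ℕ} :
    hasPeriod a m ↔ (m : Fin n) ∈ stab a := Iff.rfl

theorem hasPeriod_n (a : Fin n → G) : hasPeriod a n := by
  intro i; simp

theorem hasPeriod_mul {a : Fin n → G} {j : ℕ} (h : hasPeriod a j) (c : ℕ) :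
    hasPeriod a (j * c) := by
  have key : ((j * c : ℕ) : Fin n) = c • ((j : ℕ) : Fin n) := by
    push_cast
    rw [nsmul_eq_mul]; ring
  rw [hasPeriod_iff_mem, key]
  exact AddSubgroup.nsmul_mem _ (hasPeriod_iff_mem.mp h) c

theorem hasPeriod_gcd {a : Fin n → G} {j l : ℕ} (hj : hasPeriod a j) (hl : hasPeriod a l) :
    hasPeriod a (Nat.gcd j l) := by
  have hb := Nat.gcd_eq_gcd_ab j l
  have key : ((Nat.gcd j l : ℕ) : Fin n)
      = (Nat.gcdA j l) • ((j : ℕ) : Fin n) + (Nat.gcdB j l) • ((l : ℕ) : Fin n) := by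
    have h2 : (((Nat.gcd j l : ℤ)) : Fin n) = ((j * Nat.gcdA j l + l * Nat.gcdB j l : ℤ) : Fin n) := by
      rw [← hb]
    push_cast at h2
    rw [zsmul_eq_mul, zsmul_eq_mul]
    rw [h2]; ring
  rw [hasPeriod_iff_mem, key]
  exact AddSubgroup.add_mem _ (AddSubgroup.zsmul_mem _ (hasPeriod_iff_mem.mp hj) _)
    (AddSubgroup.zsmul_mem _ (hasPeriod_iff_mem.mp hl) _)

noncomputable def per (a : Fin n → G) : ℕ := sInf {j | 0 < j ∧ hasPeriod a j}

theorem per_spec (a : Fin n → G) : 0 < per a ∧ hasPeriod a (per a) := by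
  have hne : {j | 0 < j ∧ hasPeriod a j}.Nonempty :=
    ⟨n, Nat.pos_of_ne_zero (NeZero.ne n), hasPeriod_n a⟩
  exact Nat.sInf_mem hne

theorem per_le {a : Fin n → G} {j : ℕ} (hj : 0 < j) (h : hasPeriod a j) : per a ≤ j :=
  Nat.sInf_le ⟨hj, h⟩

theorem hasPeriod_iff_dvd {a : Fin n → G} {m : ℕ} : hasPeriod a m ↔ per a ∣ m := by
  constructor
  · intro h
    rcases Nat.eq_zero_or_pos m with rfl | hm
    · simp
    have hg : hasPeriod a (Nat.gcd (per a) m) := hasPeriod_gcd (per_spec a).2 h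
    have h1 : per a ≤ Nat.gcd (per a) m := per_le (Nat.gcd_pos_of_pos_right _ hm) hg
    have h2 : Nat.gcd (per a) m ≤ per a := Nat.gcd_le_left _ (per_spec a).1
    have h3 : Nat.gcd (per a) m = per a := le_antisymm h2 h1
    rw [← h3]
    exact Nat.gcd_dvd_right _ _
  · rintro ⟨c, rfl⟩
    exact hasPeriod_mul (per_spec a).2 c

theorem per_dvd_n (a : Fin n → G) : per a ∣ n := hasPeriod_iff_dvd.mp (hasPeriod_n a)

theorem per_eq_iff {a : Fin n → G} {k : ℕ} (hk : 0 < k) :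
    (hasPeriod a k ∧ ∀ j, 0 < j → j < k → ¬ hasPeriod a j) ↔ per a = k := by
  constructor
  · rintro ⟨h1, h2⟩
    have hd : per a ∣ k := hasPeriod_iff_dvd.mp h1
    have hle : per a ≤ k := Nat.le_of_dvd hk hd
    rcases lt_or_eq_of_le hle with hlt | heq
    · exact absurd (per_spec a).2 (h2 _ (per_spec a).1 hlt)
    · exact heq
  · rintro rfl
    exact ⟨(per_spec a).2, fun j hj hjk hp => absurd (per_le hj hp) (not_le.mpr hjk)⟩


def shift (r : Fin n) (a : Fin n → G) : Fin n → G := fun i => a (i + r)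

def orbit (a : Fin n → G) : Set (Fin n → G) := {b | ∃ r : Fin n, ∀ i, b i = a (i + r)}

theorem hasPeriod_shift {a : Fin n → G} {r : Fin n} {m : ℕ} :
    hasPeriod (shift r a) m ↔ hasPeriod a m := by
  constructor
  · intro h i
    have h2 := h (i - r)
    simp only [shift] at h2
    rwa [sub_add_cancel, add_right_comm, sub_add_cancel] at h2
  · intro h i
    simp only [shift]
    rw [add_right_comm]
    exact h (i + r)

theorem per_shift (a : Fin n → G) (r : Fin n) : per (shift r a) = per a := by
  unfold per
  congr 1
  ext j
  simp [hasPeriod_shift]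

theorem ofFn_shift_eq_rotate (a : Fin n → G) (r : Fin n) :
    List.ofFn (shift r a) = (List.ofFn a).rotate r.val := by
  apply List.ext_getElem
  · simp
  · intro i h1 h2
    simp only [List.getElem_ofFn, List.getElem_rotate, List.length_ofFn, shift]
    congr 1

theorem prod_shift {a : Fin n → G} (h : (List.ofFn a).prod = 1) (r : Fin n) :
    (List.ofFn (shift r a)).prod = 1 := by
  rw [ofFn_shift_eq_rotate]
  exact List.prod_rotate_eq_one_of_prod_eq_one h _

theorem mem_orbit_self (a : Fin n → G) : a ∈ orbit a :=
  ⟨0, fun i => by simp⟩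

theorem shift_mem_orbit (a : Fin n → G) (r : Fin n) : shift r a ∈ orbit a :=
  ⟨r, fun _ => rfl⟩

theorem orbit_shift (a : Fin n → G) (r : Fin n) : orbit (shift r a) = orbit a := by
  ext b
  constructor
  · rintro ⟨u, hu⟩
    refine ⟨u + r, fun i => ?_⟩
    rw [hu i]
    simp only [shift]
    congr 1
    ring
  · rintro ⟨u, hu⟩
    refine ⟨u - r, fun i => ?_⟩
    rw [hu i]
    simp only [shift]
    congr 1
    ring


theorem ofFn_cast {α : Type*} {m m' : ℕ} (h : m = m') (f : Fin m' → α) :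
    List.ofFn (fun i : Fin m => f (Fin.cast h i)) = List.ofFn f := by
  subst h; rfl

theorem natCast_fin_eq {d : ℕ} [NeZero d] {x y : ℕ} (h : x % d = y % d) :
    (x : Fin d) = (y : Fin d) := by
  apply Fin.ext
  rw [Fin.val_natCast, Fin.val_natCast, h]

theorem apply_eq_mod {a : Fin n → G} {d : ℕ} (h : hasPeriod a d) (i : Fin n) :
    a i = a ((i.val % d : ℕ) : Fin n) := by
  conv_lhs => rw [← Fin.cast_val_eq_self i]
  have h2 : ((i.val : ℕ) : Fin n) = ((i.val % d : ℕ) : Fin n) + ((d * (i.val / d) : ℕ) : Fin n) := by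
    rw [← Nat.cast_add]
    congr 1
    rw [add_comm]
    exact (Nat.div_add_mod i.val d).symm ▸ rfl
  rw [h2]
  exact hasPeriod_mul h (i.val / d) _

theorem prod_ofFn_periodic {d : ℕ} [NeZero d] (b : Fin d → G) :
    ∀ (c : ℕ) (g : Fin (d * c) → G), (∀ i, g i = b ((i.val : ℕ) : Fin d)) →
      (List.ofFn g).prod = (List.ofFn b).prod ^ c := by
  intro c
  induction c with
  | zero =>
    intro g _
    have : List.ofFn g = [] := by
      apply List.eq_nil_of_length_eq_zero
      simp
    rw [this]
    simp
  | succ c ih =>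
    intro g hg
    have h : d * (c + 1) = d + d * c := by ring
    have e1 : List.ofFn g = List.ofFn (fun i : Fin (d + d * c) => g (Fin.cast h.symm i)) :=
      (ofFn_cast h.symm g).symm
    rw [e1, List.ofFn_add, List.prod_append]
    have e2 : (fun i : Fin d => g (Fin.cast h.symm (Fin.castAdd (d * c) i))) = b := by
      funext i
      rw [hg]
      congr 1
      simp [Fin.cast_val_eq_self]
    have e3 : (List.ofFn fun i : Fin (d * c) => g (Fin.cast h.symm (Fin.natAdd d i))).prod
        = (List.ofFn b).prod ^ c := by
      apply ih
      intro i
      rw [hg]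
      apply congrArg
      apply natCast_fin_eq
      simp [Nat.add_mod_left]
    rw [e3, pow_succ', ← e2]; rfl

theorem dmod_aux (hdn : d ∣ n) (hd : 0 < d) : d % n % d = 0 := by
  rcases Nat.lt_or_ge d n with h | h
  · rw [Nat.mod_eq_of_lt h, Nat.mod_self]
  · have : d = n := le_antisymm (Nat.le_of_dvd (Nat.pos_of_ne_zero (NeZero.ne n)) hdn) h
    rw [this, Nat.mod_self, Nat.zero_mod]

/-- The equivalence counting period-`d` identity-product tuples. -/
noncomputable def periodEquiv (d : ℕ) (hd : 0 < d) (hdn : d ∣ n) :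
    {a : Fin n → G // (List.ofFn a).prod = 1 ∧ hasPeriod a d}
      ≃ {b : Fin d → G // (List.ofFn b).prod ^ (n / d) = 1} := by
  haveI : NeZero d := ⟨hd.ne'⟩
  have hn : d * (n / d) = n := Nat.mul_div_cancel' hdn
  refine
  { toFun := fun a => ⟨fun i => a.val ((i.val : ℕ) : Fin n), ?_⟩
    invFun := fun b => ⟨fun i => b.val ((i.val : ℕ) : Fin d), ?_, ?_⟩
    left_inv := ?_
    right_inv := ?_ }
  · -- (prod b) ^ (n/d) = 1
    obtain ⟨a, ha1, ha2⟩ := a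
    have key := prod_ofFn_periodic (G := G) (fun i : Fin d => a ((i.val : ℕ) : Fin n)) (n / d)
      (fun i => a (Fin.cast hn i)) ?_
    · rw [← key, ofFn_cast hn, ha1]
    · intro i
      rw [apply_eq_mod ha2 (Fin.cast hn i)]
      simp [Fin.val_natCast]
  · -- prod = 1
    obtain ⟨b, hb⟩ := b
    have key := prod_ofFn_periodic (G := G) b (n / d)
      (fun i => b (((Fin.cast hn i).val : ℕ) : Fin d)) (fun i => rfl)
    show (List.ofFn fun i : Fin n => b ((i.val : ℕ) : Fin d)).prod = 1
    rw [show (List.ofFn fun i : Fin n => b ((i.val : ℕ) : Fin d))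
        = List.ofFn (fun i => b (((Fin.cast hn i).val : ℕ) : Fin d)) from (ofFn_cast hn _).symm,
      key, hb]
  · -- hasPeriod d
    obtain ⟨b, hb⟩ := b
    intro i
    simp only []
    apply congrArg
    apply natCast_fin_eq
    rw [Fin.add_def]
    simp only [Fin.val_natCast]
    rw [Nat.mod_mod_of_dvd _ hdn, Nat.add_mod, dmod_aux hdn hd]
    simp [Nat.mod_mod_of_dvd _ hdn]
  · -- left inverse
    rintro ⟨a, ha1, ha2⟩
    apply Subtype.ext
    funext i
    simp only []
    rw [Fin.val_natCast]
    exact (apply_eq_mod ha2 i).symm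
  · -- right inverse
    rintro ⟨b, hb⟩
    apply Subtype.ext
    funext i
    simp only []
    rw [Fin.val_natCast]
    have : i.val % n = i.val := Nat.mod_eq_of_lt
      (lt_of_lt_of_le i.isLt (Nat.le_of_dvd (Nat.pos_of_ne_zero (NeZero.ne n)) hdn))
    rw [this, Fin.cast_val_eq_self]


def headEquiv (m e : ℕ) :
    {b : Fin (e + 1) → G // (List.ofFn b).prod ^ m = 1} ≃ {g : G // g ^ m = 1} × (Fin e → G) where
  toFun b := ⟨⟨(List.ofFn b.val).prod, b.prop⟩, fun i => b.val i.succ⟩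
  invFun x := ⟨Fin.cons (x.1.val * (List.ofFn x.2).prod⁻¹) x.2, by
    rw [List.ofFn_succ]
    simp only [Fin.cons_zero, Fin.cons_succ]
    rw [List.prod_cons, inv_mul_cancel_right]
    exact x.1.prop⟩
  left_inv := by
    rintro ⟨b, hb⟩
    apply Subtype.ext
    simp only []
    conv_lhs => rw [List.ofFn_succ, List.prod_cons, mul_inv_cancel_right]
    exact Fin.cons_self_tail b
  right_inv := by
    rintro ⟨⟨g, hg⟩, t⟩
    refine Prod.ext ?_ ?_
    · apply Subtype.ext
      simp only [List.ofFn_succ, Fin.cons_zero, Fin.cons_succ, List.prod_cons,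
        inv_mul_cancel_right]
    · funext i
      simp [Fin.cons_succ]

theorem card_period_eq_sum [Fintype G] {d : ℕ} (hd : 0 < d) :
    Nat.card {a : Fin n → G // (List.ofFn a).prod = 1 ∧ hasPeriod a d}
      = ∑ e ∈ d.divisors, Nat.card {a : Fin n → G // (List.ofFn a).prod = 1 ∧ per a = e} := by
  classical
  rw [Nat.card_eq_fintype_card, Fintype.card_subtype]
  rw [Finset.card_eq_sum_card_fiberwise (t := d.divisors) (f := per)
    (fun a ha => by
      have ha' : (List.ofFn a).prod = 1 ∧ hasPeriod a d := by simpa using ha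
      exact Nat.mem_divisors.mpr ⟨hasPeriod_iff_dvd.mp ha'.2, hd.ne'⟩)]
  apply Finset.sum_congr rfl
  intro e he
  rw [Nat.card_eq_fintype_card, Fintype.card_subtype]
  congr 1
  ext a
  simp only [Finset.mem_filter, Finset.mem_univ, true_and]
  constructor
  · rintro ⟨⟨h1, _⟩, h3⟩; exact ⟨h1, h3⟩
  · rintro ⟨h1, h3⟩
    exact ⟨⟨h1, hasPeriod_iff_dvd.mpr (h3 ▸ Nat.dvd_of_mem_divisors he)⟩, h3⟩


theorem card_period_dvd [Fintype G] (d : ℕ) (hd : 0 < d) (hdn : d ∣ n) :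
    Nat.card {a : Fin n → G // (List.ofFn a).prod = 1 ∧ hasPeriod a d}
      = Nat.card {g : G // g ^ (n / d) = 1} * Fintype.card G ^ (d - 1) := by
  classical
  obtain ⟨e, rfl⟩ : ∃ e, d = e + 1 := ⟨d - 1, (Nat.succ_pred_eq_of_pos hd).symm⟩
  rw [Nat.card_congr ((periodEquiv _ hd hdn).trans (headEquiv (n / (e + 1)) e)), Nat.card_prod]
  congr 1
  simp [Nat.card_eq_fintype_card]


theorem card_orbits_mul [Fintype G] {k : ℕ} (hk : 0 < k) (hkn : k ∣ n) :
    Nat.card {s : Set (Fin n → G) // ∃ a : Fin n → G, (List.ofFn a).prod = 1 ∧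
        hasPeriod a k ∧ (∀ j : ℕ, 0 < j → j < k → ¬ hasPeriod a j) ∧ s = orbit a} * k
      = Nat.card {a : Fin n → G // (List.ofFn a).prod = 1 ∧ per a = k} := by
  classical
  set T := {s : Set (Fin n → G) // ∃ a : Fin n → G, (List.ofFn a).prod = 1 ∧
      hasPeriod a k ∧ (∀ j : ℕ, 0 < j → j < k → ¬ hasPeriod a j) ∧ s = orbit a} with hT
  set src := {a : Fin n → G // (List.ofFn a).prod = 1 ∧ per a = k} with hsrc
  haveI : Fintype src := Fintype.ofFinite src
  haveI : Fintype T := Fintype.ofFinite T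
  let Φ : src → T := fun a => ⟨orbit a.val, a.val, a.prop.1,
    ((per_eq_iff hk).mpr a.prop.2).1, ((per_eq_iff hk).mpr a.prop.2).2, rfl⟩
  have hfib : ∀ t : T, Nat.card {x : src // Φ x = t} = k := by
    intro t
    obtain ⟨a, ha1, ha2, ha3, hs⟩ := t.prop
    have hpa : per a = k := (per_eq_iff hk).mp ⟨ha2, ha3⟩
    let F : Fin k → {x : src // Φ x = t} := fun r =>
      ⟨⟨shift ((r.val : ℕ) : Fin n) a, prod_shift ha1 _, by rw [per_shift]; exact hpa⟩,
       Subtype.ext (by show orbit _ = t.val; rw [orbit_shift]; exact hs.symm)⟩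
    have hbij : Function.Bijective F := by
      constructor
      · have key : ∀ r r' : Fin k,
            shift ((r.val : ℕ) : Fin n) a = shift ((r'.val : ℕ) : Fin n) a →
            r.val ≤ r'.val → r = r' := by
          intro r r' h hle
          have hper : hasPeriod a (r'.val - r.val) := by
            intro i
            have h2 := congrFun h (i - ((r.val : ℕ) : Fin n))
            simp only [shift] at h2
            rw [sub_add_cancel] at h2
            have e : i - ((r.val : ℕ) : Fin n) + ((r'.val : ℕ) : Fin n)
                = i + (((r'.val - r.val : ℕ)) : Fin n) := by
              have e2 : ((r'.val : ℕ) : Fin n)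
                  = ((r'.val - r.val : ℕ) : Fin n) + ((r.val : ℕ) : Fin n) := by
                rw [← Nat.cast_add, Nat.sub_add_cancel hle]
              rw [e2]; ring
            rw [e] at h2
            exact h2.symm
          have hdvd : k ∣ r'.val - r.val := hpa ▸ hasPeriod_iff_dvd.mp hper
          have hz := Nat.eq_zero_of_dvd_of_lt hdvd
            (lt_of_le_of_lt (Nat.sub_le _ _) r'.isLt)
          exact Fin.ext (le_antisymm hle (Nat.sub_eq_zero_iff_le.mp hz))
        intro r r' h
        have h2 : shift ((r.val : ℕ) : Fin n) a = shift ((r'.val : ℕ) : Fin n) a :=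
          congrArg (fun x : {x : src // Φ x = t} => x.val.val) h
        rcases le_total r.val r'.val with hle | hle
        · exact key r r' h2 hle
        · exact (key r' r h2.symm hle).symm
      · rintro ⟨⟨b, hb1, hb2⟩, hΦ⟩
        have horb : orbit b = orbit a := by
          have h3 : orbit b = t.val := congrArg Subtype.val hΦ
          rw [h3, hs]
        have hbmem : b ∈ orbit a := horb ▸ mem_orbit_self b
        obtain ⟨u, hu⟩ := hbmem
        refine ⟨⟨u.val % k, Nat.mod_lt _ hk⟩, ?_⟩
        apply Subtype.ext; apply Subtype.ext
        show shift ((u.val % k : ℕ) : Fin n) a = b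
        funext i
        show a (i + ((u.val % k : ℕ) : Fin n)) = b i
        rw [hu i]
        have e : i + u = (i + ((u.val % k : ℕ) : Fin n)) + ((k * (u.val / k) : ℕ) : Fin n) := by
          have h4 : u = ((u.val % k : ℕ) : Fin n) + ((k * (u.val / k) : ℕ) : Fin n) := by
            rw [← Nat.cast_add, Nat.mod_add_div, Fin.cast_val_eq_self]
          conv_lhs => rw [h4]
          ring
        rw [e]
        exact (hasPeriod_mul ha2 (u.val / k) _).symm
    rw [← Nat.card_eq_of_bijective F hbij, Nat.card_eq_fintype_card, Fintype.card_fin]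
  have h1 : Nat.card src = ∑ t : T, Nat.card {x : src // Φ x = t} := by
    rw [← Nat.card_congr (Equiv.sigmaFiberEquiv Φ), Nat.card_eq_fintype_card,
      Fintype.card_sigma]
    simp [Nat.card_eq_fintype_card]
  calc Nat.card T * k = ∑ _t : T, k := by
        rw [Finset.sum_const, Finset.card_univ, smul_eq_mul, Nat.card_eq_fintype_card]
    _ = ∑ t : T, Nat.card {x : src // Φ x = t} := Finset.sum_congr rfl fun t _ => (hfib t).symm
    _ = Nat.card src := h1.symm


end NecklaceAux

open NecklaceAux

/-- The number of identity-product `n`-necklaces with smallest period `k` (for `k ∣ n`),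
multiplied by `k`, equals `∑_{d ∣ k} μ(k/d) ⬝ [G ÷ (n/d)] ⬝ |G|^(d-1)`. -/
theorem card_identity_product_necklaces_smallest_period (G : Type*) [Group G] [Fintype G]
    (n k : ℕ) [NeZero n] (hk : 0 < k) (hkn : k ∣ n) :
    (Nat.card {s : Set (Fin n → G) //
        ∃ a : Fin n → G, (List.ofFn a).prod = 1 ∧
          (∀ i : Fin n, a (i + (k : Fin n)) = a i) ∧
          (∀ j : ℕ, 0 < j → j < k → ¬ (∀ i : Fin n, a (i + (j : Fin n)) = a i)) ∧
          s = {b : Fin n → G | ∃ r : Fin n, ∀ i : Fin n, b i = a (i + r)}} : ℤ) * k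
      = ∑ d ∈ k.divisors,
          ArithmeticFunction.moebius (k / d)
            * (Nat.card {g : G // g ^ (n / d) = 1} : ℤ)
            * (Fintype.card G : ℤ) ^ (d - 1) := by
  classical
  have hmob := (ArithmeticFunction.sum_eq_iff_sum_smul_moebius_eq_on (R := ℤ)
    (f := fun e => (Nat.card {a : Fin n → G // (List.ofFn a).prod = 1 ∧ per a = e} : ℤ))
    (g := fun d => (Nat.card {a : Fin n → G // (List.ofFn a).prod = 1 ∧ hasPeriod a d} : ℤ))
    {m | m ∣ n} (fun m m' hmm' hm' => hmm'.trans hm')).mp ?_ k hk hkn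
  swap
  · intro m hm _
    rw [← Nat.cast_sum]
    exact_mod_cast (card_period_eq_sum hm).symm
  rw [Nat.sum_divisorsAntidiagonal'
    (f := fun x y => (ArithmeticFunction.moebius x : ℤ)
      • (Nat.card {a : Fin n → G // (List.ofFn a).prod = 1 ∧ hasPeriod a y} : ℤ))] at hmob
  calc (Nat.card {s : Set (Fin n → G) //
        ∃ a : Fin n → G, (List.ofFn a).prod = 1 ∧
          (∀ i : Fin n, a (i + (k : Fin n)) = a i) ∧
          (∀ j : ℕ, 0 < j → j < k → ¬ (∀ i : Fin n, a (i + (j : Fin n)) = a i)) ∧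
          s = {b : Fin n → G | ∃ r : Fin n, ∀ i : Fin n, b i = a (i + r)}} : ℤ) * k
      = ((Nat.card {s : Set (Fin n → G) // ∃ a : Fin n → G, (List.ofFn a).prod = 1 ∧
          hasPeriod a k ∧ (∀ j : ℕ, 0 < j → j < k → ¬ hasPeriod a j) ∧ s = orbit a} * k : ℕ) : ℤ) := by
        push_cast; rfl
    _ = (Nat.card {a : Fin n → G // (List.ofFn a).prod = 1 ∧ per a = k} : ℤ) := by
        exact_mod_cast card_orbits_mul (G := G) (n := n) hk hkn
    _ = ∑ i ∈ k.divisors, (ArithmeticFunction.moebius (k / i) : ℤ)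
          • (Nat.card {a : Fin n → G // (List.ofFn a).prod = 1 ∧ hasPeriod a i} : ℤ) := hmob.symm
    _ = _ := by
        apply Finset.sum_congr rfl
        intro i hi
        rw [card_period_dvd i (Nat.pos_of_mem_divisors hi)
          ((Nat.dvd_of_mem_divisors hi).trans hkn)]
        rw [zsmul_eq_mul]
        push_cast
        ring
end

section
/- Let G be a finite group and n a positive integer. The number of orbits of the action of Cₙ × G on Gⁿ (where Cₙ acts by cyclic rotation and G acts by simultaneous left multiplication on all entries) equals the number of orbits of Cₙ acting by cyclic rotation on the set of n-tuples in Gⁿ whose entries multiply to the identity. -/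
section Aux

variable {G : Type*} [Group G] {n : ℕ} [NeZero n]

def Phi (a : Fin n → G) : Fin n → G := fun i => (a i)⁻¹ * a (i + 1)

lemma tele (g : ℕ → G) (m : ℕ) :
    (List.ofFn (fun i : Fin m => (g i)⁻¹ * g (i + 1))).prod = (g 0)⁻¹ * g m := by
  induction m with
  | zero => simp
  | succ m ih =>
    rw [List.ofFn_succ']
    simp only [List.concat_eq_append, List.prod_append, List.prod_cons, List.prod_nil,
      Fin.coe_castSucc, Fin.val_last, mul_one]
    rw [ih]
    group

open Fin.NatCast in
lemma phi_prod (a : Fin n → G) : (List.ofFn (Phi a)).prod = 1 := by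
  have h : Phi a = fun i : Fin n =>
      (a (((i : ℕ) : Fin n)))⁻¹ * a ((((i : ℕ) + 1 : ℕ) : Fin n)) := by
    funext i
    simp only [Phi, Nat.cast_add, Nat.cast_one, Fin.cast_val_eq_self]
  rw [h, tele (fun k : ℕ => a (k : Fin n))]
  simp [Fin.cast_val_eq_self]

open Fin.NatCast in
lemma phi_eq (x y : Fin n → G) (h : Phi x = Phi y) (i : Fin n) :
    y i = y 0 * (x 0)⁻¹ * x i := by
  have key : ∀ k : ℕ, y (k : Fin n) = y 0 * (x 0)⁻¹ * x (k : Fin n) := by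
    intro k
    induction k with
    | zero => simp
    | succ k ih =>
      have hk := congrFun h (k : Fin n)
      simp only [Phi] at hk
      have h2 : y ((k : Fin n) + 1) = y (k : Fin n) * ((x (k : Fin n))⁻¹ * x ((k : Fin n) + 1)) := by
        rw [hk]; group
      push_cast
      rw [h2, ih]; group
  have := key (i : ℕ)
  rwa [Fin.cast_val_eq_self] at this

lemma phi_surj (d : Fin n → G) (hd : (List.ofFn d).prod = 1) : ∃ a : Fin n → G, Phi a = d := by
  refine ⟨fun i => ((List.ofFn d).take i).prod, ?_⟩
  funext i
  have hlen : (List.ofFn d).length = n := List.length_ofFn (f := d)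
  have hi : (i : ℕ) < (List.ofFn d).length := by rw [hlen]; exact i.isLt
  have hstep : ((List.ofFn d).take ((i : ℕ) + 1)).prod =
      ((List.ofFn d).take i).prod * d i := by
    rw [List.prod_take_succ _ _ hi]
    congr 1
    simp
  have hval : (((i : Fin n) + 1 : Fin n) : ℕ) = ((i : ℕ) + 1) % n := by
    rw [Fin.val_add, Fin.val_one']
    conv_rhs => rw [Nat.add_mod]
    rw [Nat.mod_eq_of_lt i.isLt]
  show (((List.ofFn d).take i).prod)⁻¹ * ((List.ofFn d).take ((i + 1 : Fin n) : ℕ)).prod = d i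
  rcases eq_or_lt_of_le (Nat.succ_le_of_lt i.isLt) with heq | hlt
  · have heq' : (i : ℕ) + 1 = n := heq
    have h0 : (((i : Fin n) + 1 : Fin n) : ℕ) = 0 := by rw [hval, heq', Nat.mod_self]
    rw [h0]
    have h1 : ((List.ofFn d).take ((i : ℕ) + 1)).prod = 1 := by
      rw [heq', List.take_of_length_le (le_of_eq hlen), hd]
    rw [hstep] at h1
    simp only [List.take_zero, List.prod_nil]
    rw [← h1]
    group
  · have hlt' : (i : ℕ) + 1 < n := hlt
    have h1 : (((i : Fin n) + 1 : Fin n) : ℕ) = (i : ℕ) + 1 := by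
      rw [hval, Nat.mod_eq_of_lt hlt']
    rw [h1, hstep, inv_mul_cancel_left]

end Aux

section Orbits

variable {G : Type*} [Group G] {n : ℕ} [NeZero n]

def O1 (a : Fin n → G) : Set (Fin n → G) :=
  {b : Fin n → G | ∃ r : Fin n, ∃ h : G, ∀ i : Fin n, b i = h * a (i + r)}

def O2 (a : Fin n → G) : Set (Fin n → G) :=
  {b : Fin n → G | ∃ r : Fin n, ∀ i : Fin n, b i = a (i + r)}

lemma image_O1 (a : Fin n → G) : Phi '' O1 a = O2 (Phi a) := by
  ext b
  constructor
  · rintro ⟨c, ⟨r, h, hc⟩, rfl⟩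
    refine ⟨r, fun i => ?_⟩
    simp only [Phi, hc, mul_inv_rev, add_right_comm i 1 r]
    group
  · rintro ⟨r, hb⟩
    refine ⟨fun i => a (i + r), ⟨r, 1, fun i => (one_mul _).symm⟩, ?_⟩
    funext i
    rw [hb i]
    simp only [Phi, add_right_comm i 1 r]

lemma O1_eq_of_mem {a a' : Fin n → G} (h : a' ∈ O1 a) : O1 a' = O1 a := by
  obtain ⟨r, g, hg⟩ := h
  ext b
  constructor
  · rintro ⟨r', g', hb⟩
    refine ⟨r' + r, g' * g, fun i => ?_⟩
    rw [hb i, hg (i + r'), ← mul_assoc, ← add_assoc]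
  · rintro ⟨r', g', hb⟩
    refine ⟨r' - r, g' * g⁻¹, fun i => ?_⟩
    rw [hb i, hg (i + (r' - r)), add_assoc, sub_add_cancel]
    group

end Orbits

/-- The number of orbits of `Cₙ × G` acting on `Gⁿ` (rotation together with
simultaneous left multiplication) equals the number of orbits of `Cₙ` acting by
rotation on the identity-product `n`-tuples. -/
theorem card_homogeneous_necklaces_eq_card_identity_product_necklaces
    (G : Type*) [Group G] [Fintype G] (n : ℕ) [NeZero n] :
    Nat.card {s : Set (Fin n → G) //
        ∃ a : Fin n → G,
          s = {b : Fin n → G | ∃ r : Fin n, ∃ h : G, ∀ i : Fin n, b i = h * a (i + r)}}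
      = Nat.card {s : Set (Fin n → G) //
          ∃ a : Fin n → G, (List.ofFn a).prod = 1 ∧
            s = {b : Fin n → G | ∃ r : Fin n, ∀ i : Fin n, b i = a (i + r)}} := by
  apply Nat.card_congr
  refine Equiv.ofBijective
    (fun s => ⟨Phi '' s.1, by
      obtain ⟨a, ha⟩ := s.2
      exact ⟨Phi a, phi_prod a, by rw [ha]; exact image_O1 a⟩⟩) ⟨?_, ?_⟩
  · intro s t hst
    have h : Phi '' s.1 = Phi '' t.1 := congrArg Subtype.val hst
    obtain ⟨a, ha⟩ := s.2
    obtain ⟨a', ha'⟩ := t.2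
    have ha2 : s.1 = O1 a := ha
    have ha2' : t.1 = O1 a' := ha'
    rw [ha2, ha2', image_O1, image_O1] at h
    have hmem : Phi a' ∈ O2 (Phi a) := by
      rw [h]
      exact ⟨0, fun i => by rw [add_zero]⟩
    obtain ⟨r, hr⟩ := hmem
    set x : Fin n → G := fun i => a (i + r) with hxdef
    have hx : Phi x = Phi a' := by
      funext i
      have : Phi x i = Phi a (i + r) := by
        simp only [Phi, hxdef, add_right_comm i 1 r]
      rw [this, ← hr i]
    have hmem' : a' ∈ O1 a := by
      refine ⟨r, a' 0 * (x 0)⁻¹, fun i => ?_⟩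
      exact phi_eq x a' hx i
    apply Subtype.ext
    rw [ha2, ha2', O1_eq_of_mem hmem']
  · rintro ⟨t, a, hprod, ht⟩
    obtain ⟨c, hc⟩ := phi_surj a hprod
    refine ⟨⟨O1 c, ⟨c, rfl⟩⟩, ?_⟩
    apply Subtype.ext
    show Phi '' O1 c = t
    rw [image_O1, hc]
    exact ht.symm
end
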